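/- arXiv:math/0104282 — 4 statements merged into one kernel-verified Lean document; each statement's English description precedes it below -/
import Mathlib

section
/- Let p : Y → X be a covering map with Y path-connected, x ∈ X and u ∈ p⁻¹(x). Then the cardinality of the fiber p⁻¹(x) equals the index [π₁(X, x) : p₊(π₁(Y, u))] of the image of the fundamental group of Y in the fundamental group of X. -/
open CategoryTheory

/-- The homomorphism on fundamental groups induced by a continuous map. -/
noncomputable def inducedHom {X Y : Type} [TopologicalSpace X] [TopologicalSpace Y]
    {f : X → Y} (hf : Continuous f) (x : X) :
    FundamentalGroup X x →* FundamentalGroup Y (f x) :=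
  Functor.mapEnd ⟨x⟩
    (FundamentalGroupoid.fundamentalGroupoidFunctor.map
      (X := TopCat.of X) (Y := TopCat.of Y) (TopCat.ofHom ⟨f, hf⟩))

open Set unitInterval Topology

variable {E B : Type*} [TopologicalSpace E] [TopologicalSpace B] {p : E → B}

theorem IsCoveringMap.exists_unitInterval_lift (hp : IsCoveringMap p)
    (γ : C(I, B)) (u : E) (hu : p u = γ 0) :
    ∃ Γ : C(I, E), Γ 0 = u ∧ ∀ t, p (Γ t) = γ t := by
  obtain ⟨Γ, h1, h2⟩ := hp.exists_path_lifts γ u hu.symm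
  exact ⟨Γ, h2, fun t => congrFun h1 t⟩


theorem image_val_Icc (a b : I) : Subtype.val '' (Icc a b) = Icc (a:ℝ) (b:ℝ) := by
  ext x; constructor
  · rintro ⟨y, hy, rfl⟩; exact ⟨hy.1, hy.2⟩
  · rintro ⟨h1, h2⟩
    exact ⟨⟨x, ⟨a.2.1.trans h1, h2.trans b.2.2⟩⟩, ⟨h1, h2⟩, rfl⟩

theorem isPreconnected_Icc_I (a b : I) : _root_.IsPreconnected (Icc a b : Set I) := by
  apply IsInducing.subtypeVal.isPreconnected_image.mp
  rw [image_val_Icc]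
  exact isPreconnected_Icc

theorem isPreconnected_ball_I (c d : ℝ) :
    _root_.IsPreconnected ((Subtype.val ⁻¹' Ioo c d : Set I)) := by
  apply IsInducing.subtypeVal.isPreconnected_image.mp
  rw [Subtype.image_preimage_coe]
  exact ((Set.ordConnected_Icc).inter (Set.ordConnected_Ioo)).isPreconnected

theorem IsCoveringMap.continuous_liftEnd (hp : IsCoveringMap p) (H : C(I × I, B))
    (L : I → C(I, E)) (hLl : ∀ s tt, p ((L s) tt) = H (s, tt)) (u : E) (hL0 : ∀ s, (L s) 0 = u) :
    Continuous fun s => (L s) 1 := by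
  have hg := hp.isLocalHomeomorph.continuous_lift hp.isSeparatedMap
    (H.comp ⟨Prod.swap, continuous_swap⟩) (g := fun z : I × I => L z.2 z.1)
    (funext fun z => hLl z.2 z.1) (continuous_const.congr fun s => (hL0 s).symm)
    (fun a => (L a).continuous)
  exact hg.comp (continuous_const.prodMk continuous_id)

namespace IsCoveringMap
variable (hp : IsCoveringMap p)

/-- The chosen lift of a continuous map from the unit interval. -/
noncomputable def liftCM (γ : C(I, B)) (u : E) (hu : p u = γ 0) : C(I, E) :=
  (hp.exists_unitInterval_lift γ u hu).choose

theorem liftCM_zero (γ : C(I, B)) (u : E) (hu : p u = γ 0) : hp.liftCM γ u hu 0 = u :=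
  (hp.exists_unitInterval_lift γ u hu).choose_spec.1

theorem liftCM_lifts (γ : C(I, B)) (u : E) (hu : p u = γ 0) (t : I) :
    p (hp.liftCM γ u hu t) = γ t :=
  (hp.exists_unitInterval_lift γ u hu).choose_spec.2 t

theorem liftCM_unique (γ : C(I, B)) (u : E) (hu : p u = γ 0) (Γ : C(I, E))
    (h0 : Γ 0 = u) (hl : ∀ t, p (Γ t) = γ t) : ∀ t, Γ t = hp.liftCM γ u hu t := by
  have := hp.eq_of_comp_eq (A := I) Γ.continuous (hp.liftCM γ u hu).continuous
    (funext fun t => by rw [Function.comp_apply, Function.comp_apply, hl, hp.liftCM_lifts])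
    0 (by rw [h0, hp.liftCM_zero])
  intro t
  exact congrFun this t

/-- Lift of a path, as the chosen continuous lift. -/
noncomputable def liftEndP {x₀ x₁ : B} (γ : Path x₀ x₁) (u : E) (hu : p u = x₀) : E :=
  hp.liftCM γ.toContinuousMap u (by rw [hu]; exact γ.source.symm) 1

theorem liftEndP_spec {x₀ x₁ : B} (γ : Path x₀ x₁) (u : E) (hu : p u = x₀) :
    p (hp.liftEndP γ u hu) = x₁ := by
  exact (hp.liftCM_lifts γ.toContinuousMap u (by rw [hu]; exact γ.source.symm) 1).trans γ.target

/-- The lift as a path. -/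
noncomputable def liftPathP {x₀ x₁ : B} (γ : Path x₀ x₁) (u : E) (hu : p u = x₀) :
    Path u (hp.liftEndP γ u hu) where
  toFun := hp.liftCM γ.toContinuousMap u (by rw [hu]; exact γ.source.symm)
  continuous_toFun := (hp.liftCM _ _ _).continuous
  source' := hp.liftCM_zero γ.toContinuousMap u (by rw [hu]; exact γ.source.symm)
  target' := rfl

theorem liftPathP_apply {x₀ x₁ : B} (γ : Path x₀ x₁) (u : E) (hu : p u = x₀) (t : I) :
    hp.liftPathP γ u hu t
      = hp.liftCM γ.toContinuousMap u (by rw [hu]; exact γ.source.symm) t := rfl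

theorem liftPathP_lifts {x₀ x₁ : B} (γ : Path x₀ x₁) (u : E) (hu : p u = x₀) (t : I) :
    p (hp.liftPathP γ u hu t) = γ t := by
  rw [hp.liftPathP_apply]
  exact hp.liftCM_lifts γ.toContinuousMap u (by rw [hu]; exact γ.source.symm) t

theorem liftEndP_unique {x₀ x₁ : B} (γ : Path x₀ x₁) (u : E) (hu : p u = x₀)
    (Γ : I → E) (hc : Continuous Γ) (h0 : Γ 0 = u) (hl : ∀ t, p (Γ t) = γ t) :
    hp.liftEndP γ u hu = Γ 1 :=
  (hp.liftCM_unique γ.toContinuousMap u _ ⟨Γ, hc⟩ h0 hl 1).symm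

theorem liftEndP_basepoint_congr {x₀ x₁ : B} (γ : Path x₀ x₁) {u v : E} (huv : u = v)
    (hu : p u = x₀) (hv : p v = x₀) : hp.liftEndP γ u hu = hp.liftEndP γ v hv := by
  subst huv; rfl

theorem liftEndP_trans {x₀ x₁ x₂ : B} (γ : Path x₀ x₁) (δ : Path x₁ x₂) (u : E)
    (hu : p u = x₀) :
    hp.liftEndP (γ.trans δ) u hu
      = hp.liftEndP δ (hp.liftEndP γ u hu) (hp.liftEndP_spec γ u hu) := by
  set Γ := hp.liftPathP γ u hu
  set Δ := hp.liftPathP δ (hp.liftEndP γ u hu) (hp.liftEndP_spec γ u hu)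
  have := hp.liftEndP_unique (γ.trans δ) u hu (Γ.trans Δ) (Γ.trans Δ).continuous
    (Γ.trans Δ).source ?_
  · rw [this, (Γ.trans Δ).target]
  · intro t
    rw [Path.trans_apply, Path.trans_apply]
    split_ifs with h
    · exact hp.liftPathP_lifts γ u hu _
    · exact hp.liftPathP_lifts δ _ _ _

theorem liftEndP_congr {x₀ x₁ : B} (γ₀ γ₁ : Path x₀ x₁) (h : Path.Homotopic γ₀ γ₁)
    (u : E) (hu : p u = x₀) : hp.liftEndP γ₀ u hu = hp.liftEndP γ₁ u hu := by
  obtain ⟨H⟩ := h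
  have hs : ∀ s : I, p u =
      (H.toContinuousMap.comp (⟨fun t => (s, t), by continuity⟩ : C(I, I × I))) 0 := by
    intro s
    show p u = H (s, 0)
    rw [H.source s, hu]
  set L : I → C(I, E) := fun s => hp.liftCM _ u (hs s) with hLdef
  have hLl : ∀ s t, p ((L s) t) = H.toContinuousMap (s, t) := fun s t =>
    hp.liftCM_lifts _ _ _ t
  have hL0 : ∀ s, (L s) 0 = u := fun s => hp.liftCM_zero _ _ _
  have hcont : Continuous fun s => (L s) 1 :=
    hp.continuous_liftEnd H.toContinuousMap L hLl u hL0
  have hconst : (L 0) 1 = (L 1) 1 :=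
    hp.const_of_comp hcont (fun a a' => by
      rw [hLl, hLl]
      show H (a, 1) = H (a', 1)
      rw [H.target, H.target]) 0 1
  have h0 : hp.liftEndP γ₀ u hu = (L 0) 1 :=
    hp.liftEndP_unique γ₀ u hu (L 0) (L 0).continuous (hL0 0) (fun t => by
      rw [hLl]
      exact H.apply_zero t)
  have h1 : hp.liftEndP γ₁ u hu = (L 1) 1 :=
    hp.liftEndP_unique γ₁ u hu (L 1) (L 1).continuous (hL0 1) (fun t => by
      rw [hLl]
      exact H.apply_one t)
  rw [h0, h1, hconst]

end IsCoveringMap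


section Monodromy

open unitInterval

attribute [local instance] Path.Homotopic.setoid

variable {X Y : Type} [TopologicalSpace X] [TopologicalSpace Y]

/-- The monodromy action of the fundamental group on the fiber of a covering map. -/
noncomputable def monodromy {p : Y → X} (hp : IsCoveringMap p) (u : Y) :
    FundamentalGroup X (p u) → {v : Y // p v = p u} := fun g =>
  Quotient.lift
    (fun γ : Path (p u) (p u) => (⟨hp.liftEndP γ u rfl, by rw [hp.liftEndP_spec]⟩ :
      {v : Y // p v = p u}))
    (fun γ γ' (h : Path.Homotopic γ γ') => Subtype.ext (hp.liftEndP_congr γ γ' h u rfl))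
    g

theorem monodromy_eq {p : Y → X} (hp : IsCoveringMap p) (u : Y) (g : FundamentalGroup X (p u))
    (γ : Path (p u) (p u)) (hγ : g = ⟦γ⟧) :
    monodromy hp u g = ⟨hp.liftEndP γ u rfl, by rw [hp.liftEndP_spec]⟩ := by
  unfold monodromy
  rw [hγ]
  rfl

theorem inducedHom_hom {p : Y → X} (hp : IsCoveringMap p) (u : Y)
    (d : FundamentalGroup Y u) (δ : Path u u) (hδ : d = ⟦δ⟧) :
    (inducedHom hp.continuous u d) = ⟦δ.map hp.continuous⟧ := by
  show (FundamentalGroupoid.fundamentalGroupoidFunctor.map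
      (X := TopCat.of Y) (Y := TopCat.of X) (TopCat.ofHom ⟨p, hp.continuous⟩)).map d = _
  rw [hδ]
  exact (Path.Homotopic.Quotient.mk_map δ ⟨p, hp.continuous⟩).symm

theorem mem_inducedHom_range_iff {p : Y → X} (hp : IsCoveringMap p) (u : Y)
    (h : FundamentalGroup X (p u)) :
    h ∈ (inducedHom hp.continuous u).range ↔
      ∃ δ : Path u u, h = ⟦δ.map hp.continuous⟧ := by
  constructor
  · rintro ⟨d, rfl⟩
    obtain ⟨δ, hδ⟩ := Quotient.exists_rep d
    exact ⟨δ, inducedHom_hom hp u d δ hδ.symm⟩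
  · rintro ⟨δ, hδ⟩
    refine ⟨⟦δ⟧, ?_⟩
    exact (inducedHom_hom hp u _ δ rfl).trans hδ.symm

theorem monodromy_mul_mem {p : Y → X} (hp : IsCoveringMap p) (u : Y)
    (g h : FundamentalGroup X (p u)) (hh : h ∈ (inducedHom hp.continuous u).range) :
    monodromy hp u (g * h) = monodromy hp u g := by
  obtain ⟨γ, hγ⟩ := Quotient.exists_rep g
  obtain ⟨δ, hδ⟩ := (mem_inducedHom_range_iff hp u h).mp hh
  have hmul : (g * h) = ⟦(δ.map hp.continuous).trans γ⟧ := by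
    show h ≫ g = _
    rw [hδ, ← hγ]
    exact (Path.Homotopic.Quotient.mk_trans _ _).symm
  rw [monodromy_eq hp u _ _ hmul, monodromy_eq hp u g γ hγ.symm]
  apply Subtype.ext
  show hp.liftEndP ((δ.map hp.continuous).trans γ) u rfl = hp.liftEndP γ u rfl
  rw [hp.liftEndP_trans]
  have hδend : hp.liftEndP (δ.map hp.continuous) u rfl = u := by
    have h2 := hp.liftEndP_unique (δ.map hp.continuous) u rfl δ δ.continuous δ.source
      (fun t => rfl)
    rw [h2, δ.target]
  exact hp.liftEndP_basepoint_congr γ hδend _ rfl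

theorem monodromy_surjective [PathConnectedSpace Y] {p : Y → X} (hp : IsCoveringMap p) (u : Y) :
    Function.Surjective (monodromy hp u) := by
  rintro ⟨v, hv⟩
  let η : Path u v := PathConnectedSpace.somePath u v
  let γ : Path (p u) (p u) := (η.map hp.continuous).cast rfl hv.symm
  refine ⟨(⟦γ⟧ : FundamentalGroup X (p u)), ?_⟩
  rw [monodromy_eq hp u _ γ rfl]
  apply Subtype.ext
  show hp.liftEndP γ u rfl = v
  have h2 := hp.liftEndP_unique γ u rfl η η.continuous η.source (fun t => rfl)
  rw [h2, η.target]

end Monodromy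

/-- the cardinality of the fiber of a covering map equals the index of the
image of the fundamental group of the total space in that of the base. -/
theorem card_fiber_eq_index
    {X Y : Type} [TopologicalSpace X] [TopologicalSpace Y]
    [PathConnectedSpace X] [PathConnectedSpace Y]
    [LocallyPathConnectedSpace X] [LocallyPathConnectedSpace Y]
    (p : Y → X) (hp : IsCoveringMap p) (u : Y) :
    Cardinal.mk {v : Y // p v = p u} =
      Cardinal.mk (FundamentalGroup X (p u) ⧸ (inducedHom hp.continuous u).range) := by
  classical
  letI : Setoid (Path (p u) (p u)) := Path.Homotopic.setoid _ _
  set H := (inducedHom hp.continuous u).range with hHdef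
  have hsound : ∀ g g' : FundamentalGroup X (p u),
      @Setoid.r _ (QuotientGroup.leftRel H) g g' → monodromy hp u g = monodromy hp u g' := by
    intro g g' hr
    have hmem : g⁻¹ * g' ∈ H := QuotientGroup.leftRel_apply.mp hr
    have hgg : g' = g * (g⁻¹ * g') := by group
    rw [hgg, monodromy_mul_mem hp u g _ hmem]
  have hinj : Function.Injective (Quotient.lift (monodromy hp u) hsound) := by
    intro a b
    refine Quotient.inductionOn₂ a b ?_
    intro g g' hfeq
    have hfeq' : monodromy hp u g = monodromy hp u g' := hfeq
    obtain ⟨γ, hγ⟩ := Quotient.exists_rep g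
    obtain ⟨γ', hγ'⟩ := Quotient.exists_rep g'
    rw [monodromy_eq hp u g γ hγ.symm, monodromy_eq hp u g' γ' hγ'.symm] at hfeq'
    have hE : hp.liftEndP γ u rfl = hp.liftEndP γ' u rfl := congrArg Subtype.val hfeq'
    set Γ := hp.liftPathP γ u rfl with hΓdef
    set Γ' := hp.liftPathP γ' u rfl with hΓ'def
    set Γ'' : Path u (hp.liftEndP γ u rfl) := Γ'.cast rfl hE with hΓ''def
    set δ : Path u u := Γ.trans Γ''.symm with hδdef
    have hδmap : δ.map hp.continuous = γ.trans γ'.symm := by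
      apply Path.ext
      funext t
      show p (δ t) = (γ.trans γ'.symm) t
      rw [hδdef]
      rw [Path.trans_apply, Path.trans_apply]
      split_ifs with ht
      · exact hp.liftPathP_lifts γ u rfl _
      · exact hp.liftPathP_lifts γ' u rfl _
    set d : FundamentalGroup Y u := ⟦δ⟧ with hddef
    set h' := inducedHom hp.continuous u d with hh'def
    have hmemH : h' ∈ H := ⟨d, rfl⟩
    have hd : h' = ⟦γ.trans γ'.symm⟧ := by
      rw [hh'def, inducedHom_hom hp u d δ rfl, hδmap]
    have e2 : (⟦(γ.trans γ'.symm).trans γ'⟧ : Path.Homotopic.Quotient (p u) (p u)) = ⟦γ⟧ := by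
      apply Quotient.sound
      refine Setoid.trans ⟨Path.Homotopy.transAssoc γ γ'.symm γ'⟩ ?_
      refine Setoid.trans (Path.Homotopic.hcomp (Path.Homotopic.refl γ)
        ⟨(Path.Homotopy.reflSymmTrans γ').symm⟩) ?_
      exact ⟨Path.Homotopy.transRefl γ⟩
    have e1 : h' ≫ g' = ⟦(γ.trans γ'.symm).trans γ'⟧ := by
      rw [hd, ← hγ']
      exact (Path.Homotopic.Quotient.mk_trans _ _).symm
    have hg : g = g' * h' := by
      rw [show (g' * h') = h' ≫ g' from rfl, e1, e2]
      exact hγ.symm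
    apply Quotient.sound
    have hinv : g⁻¹ * g' = h'⁻¹ := by rw [hg]; group
    exact QuotientGroup.leftRel_apply.mpr (hinv ▸ H.inv_mem hmemH)
  have hsurj : Function.Surjective (Quotient.lift (monodromy hp u) hsound) := by
    intro v
    obtain ⟨g, hg⟩ := monodromy_surjective hp u v
    exact ⟨Quotient.mk _ g, hg⟩
  exact (Cardinal.mk_congr (Equiv.ofBijective _ ⟨hinj, hsurj⟩)).symm
end

section
/- Let f : U → H be a local homomorphism defined on a symmetric open connected neighborhood U of the identity of a simply connected topological group G with values in a topological group H (i.e., f(xy) = f(x)f(y) whenever x, y, xy ∈ U). Then f extends uniquely to a continuous group homomorphism f̄ : G → H. -/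
open unitInterval

namespace LocalHomExt

/-- `i/n` clamped to the unit interval. -/
noncomputable def pt (n i : ℕ) : I :=
  ⟨min ((i : ℝ) / n) 1, ⟨le_min (by positivity) zero_le_one, min_le_right _ _⟩⟩

lemma pt_coe {n i : ℕ} (h : (i : ℝ) / n ≤ 1) : (pt n i : ℝ) = (i : ℝ) / n :=
  min_eq_left h

lemma pt_coe_of_le {n i : ℕ} (h : i ≤ n) : (pt n i : ℝ) = (i : ℝ) / n := by
  rcases Nat.eq_zero_or_pos n with rfl | hn
  · interval_cases i; simp [pt]
  · exact pt_coe (by rw [div_le_one (by positivity)]; exact_mod_cast h)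

lemma pt_zero (n : ℕ) : pt n 0 = 0 := by
  ext; simp [pt]

lemma pt_self {n : ℕ} (hn : 0 < n) : pt n n = 1 := by
  ext; simp [pt, div_self (by positivity : (n:ℝ) ≠ 0)]

lemma abs_min_one_sub_min_one (a b : ℝ) : |min a 1 - min b 1| ≤ |a - b| := by
  rcases le_total a 1 with h1 | h1 <;> rcases le_total b 1 with h2 | h2 <;>
    simp only [min_eq_left, min_eq_right, h1, h2] <;>
    rw [abs_le] <;> constructor <;>
    [skip;skip;skip;skip;skip;skip;simp;simp] <;>
    nlinarith [le_abs_self (a-b), neg_abs_le (a-b)]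

lemma dist_pt_le (n i j : ℕ) : dist (pt n i) (pt n j) ≤ |(i : ℝ) - j| / n := by
  rcases Nat.eq_zero_or_pos n with rfl | hn
  · simp [pt, Subtype.dist_eq, Real.dist_eq]
  · rw [Subtype.dist_eq, Real.dist_eq]
    calc |(pt n i : ℝ) - (pt n j : ℝ)| ≤ |(i : ℝ)/n - (j : ℝ)/n| :=
          abs_min_one_sub_min_one _ _
      _ = |(i : ℝ) - j| / n := by
          rw [div_sub_div_same, abs_div, abs_of_pos (by positivity : (0:ℝ) < (n:ℝ))]


variable {G H : Type} [Group G] [Group H]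

/-- ordered product of `e 0 * e 1 * ⋯ * e (n-1)`. -/
def Pr (e : ℕ → H) (n : ℕ) : H := ((List.range n).map e).prod

lemma Pr_zero (e : ℕ → H) : Pr e 0 = 1 := rfl

lemma Pr_succ (e : ℕ → H) (n : ℕ) : Pr e (n + 1) = Pr e n * e n := by
  simp [Pr, List.range_succ]

lemma Pr_congr {e e' : ℕ → H} {n : ℕ} (h : ∀ i < n, e i = e' i) : Pr e n = Pr e' n := by
  induction n with
  | zero => rfl
  | succ n ih =>
    rw [Pr_succ, Pr_succ, ih fun i hi => h i (by omega), h n (by omega)]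

lemma Pr_add (e : ℕ → H) (m n : ℕ) :
    Pr e (m + n) = Pr e m * Pr (fun i => e (m + i)) n := by
  induction n with
  | zero => simp [Pr_zero]
  | succ n ih => rw [← Nat.add_assoc, Pr_succ, ih, Pr_succ, mul_assoc]

section f

variable (U : Set G) (h1U : (1 : G) ∈ U)
  (f : G → H)
  (hhom : ∀ x y : G, x ∈ U → y ∈ U → x * y ∈ U → f (x * y) = f x * f y)

include h1U hhom in
lemma f_one : f 1 = 1 := by
  have := hhom 1 1 h1U h1U (by simpa using h1U)
  rw [mul_one] at this
  exact left_eq_mul.mp this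

include h1U hhom in
lemma f_inv {x : G} (hx : x ∈ U) (hxi : x⁻¹ ∈ U) : f x⁻¹ = (f x)⁻¹ := by
  have := hhom x x⁻¹ hx hxi (by simpa using h1U)
  rw [mul_inv_cancel, f_one U h1U f hhom] at this
  exact (eq_inv_of_mul_eq_one_right this.symm)

include h1U hhom in
/-- key telescoping lemma -/
lemma telescope (a : ℕ → G) :
    ∀ n : ℕ, (∀ i ≤ n, ∀ j ≤ n, (a i)⁻¹ * a j ∈ U) →
      Pr (fun i => f ((a i)⁻¹ * a (i + 1))) n = f ((a 0)⁻¹ * a n) := by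
  intro n
  induction n with
  | zero => intro _; simp [Pr_zero, f_one U h1U f hhom]
  | succ n ih =>
    intro h
    rw [Pr_succ, ih fun i hi j hj => h i (by omega) j (by omega)]
    rw [← hhom _ _ (h 0 (by omega) n (by omega)) (h n (by omega) (n+1) (by omega))
      (by rw [← mul_assoc, mul_assoc _ (a n) _, mul_inv_cancel, mul_one]
          exact h 0 (by omega) (n+1) (by omega))]
    rw [← mul_assoc, mul_assoc _ (a n) _, mul_inv_cancel, mul_one]

end f


section P

variable [TopologicalSpace G]

variable (f : G → H)

/-- the approximating product of `f` along `γ` with `n` uniform steps. -/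
noncomputable def P (γ : I → G) (n : ℕ) : H :=
  Pr (fun i => f ((γ (pt n i))⁻¹ * γ (pt n (i + 1)))) n

/-- `γ` has modulus of continuity `1/n` w.r.t. `W`. -/
def Fine (γ : I → G) (W : Set G) (n : ℕ) : Prop :=
  0 < n ∧ ∀ s t : I, dist s t ≤ 1 / n → (γ s)⁻¹ * γ t ∈ W

lemma Fine.mono {γ : I → G} {W W' : Set G} {n m : ℕ} (h : Fine γ W n)
    (hW : W ⊆ W') (hnm : n ≤ m) : Fine γ W' m := by
  obtain ⟨hn, hfine⟩ := h
  refine ⟨hn.trans_le hnm, fun s t hst => hW (hfine s t (hst.trans ?_))⟩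
  have h0 : (0:ℝ) < n := by exact_mod_cast hn
  exact one_div_le_one_div_of_le h0 (by exact_mod_cast hnm)

variable (U : Set G) (h1U : (1 : G) ∈ U)
  (hhom : ∀ x y : G, x ∈ U → y ∈ U → x * y ∈ U → f (x * y) = f x * f y)

include h1U hhom in
/-- subdivision invariance -/
lemma P_subdiv {γ : I → G} {n : ℕ} (hn : Fine γ U n) (m : ℕ) (hm : 0 < m) :
    P f γ (n * m) = P f γ n := by
  obtain ⟨hn0, hfine⟩ := hn
  have key : ∀ k ≤ n, Pr (fun i => f ((γ (pt (n*m) i))⁻¹ * γ (pt (n*m) (i + 1)))) (k * m)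
      = Pr (fun i => f ((γ (pt n i))⁻¹ * γ (pt n (i + 1)))) k := by
    intro k
    induction k with
    | zero => intro _; simp [Pr_zero]
    | succ k ih =>
      intro hk
      rw [Nat.succ_mul, Pr_add, ih (by omega), Pr_succ]
      congr 1
      -- inner telescoping over one subinterval
      have ha : ∀ i ≤ m, ∀ j ≤ m, (γ (pt (n*m) (k*m + i)))⁻¹ * γ (pt (n*m) (k*m + j)) ∈ U := by
        intro i hi j hj
        apply hfine
        calc dist (pt (n*m) (k*m+i)) (pt (n*m) (k*m+j)) ≤ |((k*m+i:ℕ):ℝ) - ((k*m+j:ℕ):ℝ)| / (n*m) := by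
              exact_mod_cast dist_pt_le (n*m) (k*m+i) (k*m+j)
          _ ≤ 1 / n := by
              push_cast
              rw [div_le_div_iff₀ (by positivity) (by positivity : (0:ℝ) < (n:ℝ))]
              have : |((k*m:ℝ)+i) - ((k*m:ℝ)+j)| = |(i:ℝ) - j| := by ring_nf
              rw [this]
              have h1 : |(i:ℝ) - j| ≤ m := by
                have hi' : (i:ℝ) ≤ m := Nat.cast_le.mpr hi
                have hj' : (j:ℝ) ≤ m := Nat.cast_le.mpr hj
                have hi0 : (0:ℝ) ≤ i := Nat.cast_nonneg i
                have hj0 : (0:ℝ) ≤ j := Nat.cast_nonneg j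
                rw [abs_le]; constructor <;> linarith
              calc |(i:ℝ) - j| * n ≤ (m:ℝ) * n := by
                    apply mul_le_mul_of_nonneg_right h1 (Nat.cast_nonneg n)
                _ = 1 * ((n:ℝ)*m) := by ring
      have e1 : pt (n*m) (k*m) = pt n k := by
        ext
        rw [pt_coe_of_le (Nat.mul_le_mul_right m (by omega)), pt_coe_of_le (by omega)]
        push_cast
        rw [div_eq_div_iff (by positivity) (by positivity)]
        ring
      have e2 : pt (n*m) (k*m + m) = pt n (k+1) := by
        ext
        have : k*m + m = (k+1)*m := by ring
        rw [this, pt_coe_of_le (Nat.mul_le_mul_right m (by omega)), pt_coe_of_le (by omega)]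
        push_cast
        rw [div_eq_div_iff (by positivity) (by positivity)]
        ring
      have htel := telescope U h1U f hhom (fun j => γ (pt (n*m) (k*m + j))) m ha
      simp only [Nat.add_zero, ← Nat.add_assoc] at htel
      rw [htel, e1, e2]
  exact key n le_rfl

include h1U hhom in
/-- well-definedness across fineness scales -/
lemma P_eq_P {γ : I → G} {n n' : ℕ} (hn : Fine γ U n) (hn' : Fine γ U n') :
    P f γ n = P f γ n' := by
  rw [← P_subdiv f U h1U hhom hn n' hn'.1, ← P_subdiv f U h1U hhom hn' n hn.1,
    Nat.mul_comm]

end P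


section Compare

variable (f : G → H) (U : Set G) (h1U : (1 : G) ∈ U)
  (hhom : ∀ x y : G, x ∈ U → y ∈ U → x * y ∈ U → f (x * y) = f x * f y)
  (W : Set G) (h1W : (1 : G) ∈ W) (hWU : W ⊆ U)
  (hWsym : ∀ w ∈ W, w⁻¹ ∈ W)
  (hW3 : ∀ a b c : G, a ∈ W → b ∈ W → c ∈ W → a * b * c ∈ U)

include h1W hW3 in
lemma hWW : ∀ a ∈ W, ∀ b ∈ W, a * b ∈ U := fun a ha b hb => by
  have := hW3 a b 1 ha hb h1W; rwa [mul_one] at this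

include h1U hhom h1W hWU hWsym hW3 in
lemma f_split {x u y : G} (hx : x ∈ W) (hu : u ∈ W) (hy : y ∈ W) :
    f (x⁻¹ * u * y) = (f x)⁻¹ * f u * f y := by
  have hsym' : W⁻¹ ⊆ U := fun w hw => hWU (by simpa using hWsym w⁻¹ (by simpa using hw))
  have hx' : x⁻¹ ∈ W := hWsym x hx
  have huy : u * y ∈ U := hWW U W h1W hW3 u hu y hy
  have hxuy : x⁻¹ * (u * y) ∈ U := by
    have := hW3 x⁻¹ u y hx' hu hy
    rwa [mul_assoc] at this
  rw [mul_assoc, hhom x⁻¹ (u*y) (hWU hx') huy hxuy, hhom u y (hWU hu) (hWU hy) huy,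
    f_inv U h1U f hhom (hWU hx) (hWU hx'), ← mul_assoc]

end Compare


section Compare2

variable (f : G → H) (U : Set G) (h1U : (1 : G) ∈ U)
  (hhom : ∀ x y : G, x ∈ U → y ∈ U → x * y ∈ U → f (x * y) = f x * f y)
  (W : Set G) (h1W : (1 : G) ∈ W) (hWU : W ⊆ U)
  (hWsym : ∀ w ∈ W, w⁻¹ ∈ W)
  (hW3 : ∀ a b c : G, a ∈ W → b ∈ W → c ∈ W → a * b * c ∈ U)

include h1U hhom h1W hWU hWsym hW3 in
/-- comparison of products along two nearby sequences with common endpoints -/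
lemma Pr_comparison (a b : ℕ → G) (n : ℕ)
    (h0 : b 0 = a 0) (hn : b n = a n)
    (ha : ∀ i < n, (a i)⁻¹ * a (i + 1) ∈ W)
    (hc : ∀ i ≤ n, (a i)⁻¹ * b i ∈ W) :
    Pr (fun i => f ((b i)⁻¹ * b (i + 1))) n = Pr (fun i => f ((a i)⁻¹ * a (i + 1))) n := by
  have key : ∀ k ≤ n, Pr (fun i => f ((b i)⁻¹ * b (i + 1))) k
      = Pr (fun i => f ((a i)⁻¹ * a (i + 1))) k * f ((a k)⁻¹ * b k) := by
    intro k
    induction k with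
    | zero =>
      intro _
      simp [Pr_zero, h0, f_one U h1U f hhom]
    | succ k ih =>
      intro hk
      have hbb : (b k)⁻¹ * b (k + 1)
          = ((a k)⁻¹ * b k)⁻¹ * ((a k)⁻¹ * a (k + 1)) * ((a (k+1))⁻¹ * b (k + 1)) := by
        group
      rw [Pr_succ, Pr_succ, ih (by omega), hbb,
        f_split f U h1U hhom W h1W hWU hWsym hW3 (hc k (by omega)) (ha k (by omega))
          (hc (k+1) (by omega))]
      group
  have := key n le_rfl
  rw [hn] at this
  simpa [f_one U h1U f hhom] using this

end Compare2

section Delta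

variable [TopologicalSpace G] [IsTopologicalGroup G]

/-- uniform-continuity style estimate on a compact metric space -/
lemma exists_delta {X : Type*} [MetricSpace X] [CompactSpace X]
    (F : X → G) (hF : Continuous F) (W : Set G) (hW : IsOpen W) (h1W : (1 : G) ∈ W) :
    ∃ δ : ℝ, 0 < δ ∧ ∀ p q : X, dist p q ≤ δ → (F p)⁻¹ * F q ∈ W := by
  set C : Set (X × X) := {p | (F p.1)⁻¹ * F p.2 ∉ W} with hC
  have hCc : IsClosed C := by
    have : IsOpen {p : X × X | (F p.1)⁻¹ * F p.2 ∈ W} :=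
      hW.preimage (((hF.comp continuous_fst).inv).mul (hF.comp continuous_snd))
    simpa [hC, Set.compl_setOf] using this.isClosed_compl
  rcases Set.eq_empty_or_nonempty C with hCe | hCne
  · refine ⟨1, one_pos, fun p q _ => ?_⟩
    by_contra hpq
    exact Set.eq_empty_iff_forall_notMem.mp hCe (p, q) hpq
  · have hCcpt : IsCompact C := hCc.isCompact
    have hcont : ContinuousOn (fun p : X × X => dist p.1 p.2) C :=
      (continuous_fst.dist continuous_snd).continuousOn
    obtain ⟨p₀, hp₀, hmin⟩ := hCcpt.exists_isMinOn hCne hcont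
    have hδ0 : 0 < dist p₀.1 p₀.2 := by
      rcases eq_or_lt_of_le (dist_nonneg (x := p₀.1) (y := p₀.2)) with h | h
      · exfalso
        have : p₀.1 = p₀.2 := dist_eq_zero.mp h.symm
        have hmem : p₀ ∈ C := hp₀
        rw [hC] at hmem
        simp only [Set.mem_setOf_eq, this] at hmem
        exact hmem (by simpa using h1W)
      · exact h
    refine ⟨dist p₀.1 p₀.2 / 2, by positivity, fun p q hpq => ?_⟩
    by_contra hmem
    have := hmin (a := (p, q)) hmem
    simp only [Set.mem_setOf_eq] at this
    have : dist p₀.1 p₀.2 ≤ dist p q := this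
    linarith

end Delta


section FineEx

variable [TopologicalSpace G] [IsTopologicalGroup G]

lemma fine_of_delta {γ : I → G} {W : Set G} {δ : ℝ} (hδ : 0 < δ)
    (h : ∀ s t : I, dist s t ≤ δ → (γ s)⁻¹ * γ t ∈ W) {n : ℕ}
    (hn : ⌈1/δ⌉₊ + 1 ≤ n) : Fine γ W n := by
  have hn0 : 0 < n := by omega
  refine ⟨hn0, fun s t hst => h s t (hst.trans ?_)⟩
  rw [div_le_iff₀ (by exact_mod_cast hn0)]
  rw [← div_le_iff₀' hδ]
  calc 1/δ ≤ (⌈1/δ⌉₊ : ℝ) := Nat.le_ceil _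
    _ ≤ n := by exact_mod_cast Nat.le_of_lt (by omega)

lemma exists_fine (γ : I → G) (hγ : Continuous γ) (W : Set G) (hW : IsOpen W)
    (h1W : (1 : G) ∈ W) : ∃ N, ∀ n, N ≤ n → Fine γ W n := by
  obtain ⟨δ, hδ, h⟩ := exists_delta γ hγ W hW h1W
  exact ⟨⌈1/δ⌉₊ + 1, fun n hn => fine_of_delta hδ h hn⟩

end FineEx

section Homotopy

variable [TopologicalSpace G] [IsTopologicalGroup G]
  (f : G → H) (U : Set G) (h1U : (1 : G) ∈ U)
  (hhom : ∀ x y : G, x ∈ U → y ∈ U → x * y ∈ U → f (x * y) = f x * f y)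
  (W : Set G) (hWo : IsOpen W) (h1W : (1 : G) ∈ W) (hWU : W ⊆ U)
  (hWsym : ∀ w ∈ W, w⁻¹ ∈ W)
  (hW3 : ∀ a b c : G, a ∈ W → b ∈ W → c ∈ W → a * b * c ∈ U)

include h1U hhom hWo h1W hWU hWsym hW3 in
lemma P_homotopic {g : G} {γ₀ γ₁ : Path (1:G) g} (h : Path.Homotopic γ₀ γ₁)
    {n₀ n₁ : ℕ} (hn₀ : Fine γ₀ U n₀) (hn₁ : Fine γ₁ U n₁) :
    P f γ₀ n₀ = P f γ₁ n₁ := by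
  obtain ⟨F⟩ := h
  obtain ⟨δ, hδ, hd⟩ := exists_delta (fun p : I × I => F p) F.continuous W hWo h1W
  set m := ⌈1/δ⌉₊ + 1 with hm
  have hm0 : 0 < m := by omega
  have h1m : 1/(m:ℝ) ≤ δ := by
    rw [div_le_iff₀ (by exact_mod_cast hm0), ← div_le_iff₀' hδ]
    calc 1/δ ≤ (⌈1/δ⌉₊ : ℝ) := Nat.le_ceil _
      _ ≤ m := by exact_mod_cast Nat.le_of_lt (by omega)
  -- each horizontal slice is `W`-fine at scale `m`
  have hslice : ∀ s : I, Fine (fun t => F (s, t)) W m := by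
    intro s
    refine ⟨hm0, fun t t' htt' => ?_⟩
    refine hd (s, t) (s, t') ?_
    rw [Prod.dist_eq]
    simp only [dist_self]
    rw [max_eq_right dist_nonneg]
    exact htt'.trans h1m
  -- vertical neighbours are `W`-close
  have hvert : ∀ j : ℕ, ∀ t : I, (F (pt m j, t))⁻¹ * F (pt m (j+1), t) ∈ W := by
    intro j t
    refine hd (pt m j, t) (pt m (j+1), t) ?_
    rw [Prod.dist_eq]
    simp only [dist_self]
    rw [max_eq_left dist_nonneg]
    calc dist (pt m j) (pt m (j+1)) ≤ |(j:ℝ) - (j+1:ℕ)| / m := dist_pt_le m j (j+1)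
      _ ≤ δ := by
          rw [show ((j:ℝ) - ((j+1:ℕ):ℝ)) = -1 by push_cast; ring, abs_neg, abs_one]
          exact h1m
  -- chain across the homotopy
  have key : ∀ j ≤ m, P f (fun t => F (pt m j, t)) m = P f (fun t => F (pt m 0, t)) m := by
    intro j
    induction j with
    | zero => intro _; rfl
    | succ j ih =>
      intro hj
      rw [← ih (by omega)]
      -- compare slices j and j+1 via Pr_comparison
      unfold P
      exact Pr_comparison f U h1U hhom W h1W hWU hWsym hW3
        (fun i => F (pt m j, pt m i)) (fun i => F (pt m (j+1), pt m i)) m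
        (by simp only [pt_zero, Path.Homotopy.source])
        (by simp only [pt_self hm0, Path.Homotopy.target])
        (fun i _ => (hslice (pt m j)).2 (pt m i) (pt m (i+1)) (by
          calc dist (pt m i) (pt m (i+1)) ≤ |(i:ℝ) - (i+1:ℕ)| / m := dist_pt_le m i (i+1)
            _ ≤ 1/m := by
                rw [show ((i:ℝ) - ((i+1:ℕ):ℝ)) = -1 by push_cast; ring, abs_neg, abs_one]))
        (fun i _ => hvert j (pt m i))
  have hcong0 : (fun t => F (0, t)) = ⇑γ₀ := funext fun t => F.apply_zero t
  have hcong1 : (fun t => F (1, t)) = ⇑γ₁ := funext fun t => F.apply_one t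
  have hf0 : Fine (⇑γ₀) U m := by rw [← hcong0]; exact (hslice 0).mono hWU le_rfl
  have hf1 : Fine (⇑γ₁) U m := by rw [← hcong1]; exact (hslice 1).mono hWU le_rfl
  have hP : P f γ₀ m = P f γ₁ m := by
    have hk := key m le_rfl
    rw [pt_self hm0, pt_zero] at hk
    rw [← hcong0, ← hcong1]
    exact hk.symm
  calc P f γ₀ n₀ = P f γ₀ m := P_eq_P f U h1U hhom hn₀ hf0
    _ = P f γ₁ m := hP
    _ = P f γ₁ n₁ := P_eq_P f U h1U hhom hf1 hn₁

end Homotopy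


section Trans

variable [TopologicalSpace G] [IsTopologicalGroup G]
  (f : G → H) (U : Set G) (h1U : (1 : G) ∈ U)
  (hhom : ∀ x y : G, x ∈ U → y ∈ U → x * y ∈ U → f (x * y) = f x * f y)
  (W : Set G) (h1W : (1 : G) ∈ W) (hWU : W ⊆ U)
  (hWsym : ∀ w ∈ W, w⁻¹ ∈ W)
  (hW3 : ∀ a b c : G, a ∈ W → b ∈ W → c ∈ W → a * b * c ∈ U)

include h1W hWU hWsym hW3 in
lemma P_trans {g h : G} (γ : Path (1:G) g) (η : Path (1:G) h) (η' : Path g (g*h))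
    (heq : ∀ t : I, η' t = g * η t) {k : ℕ} (hγ : Fine γ W k) (hη : Fine η W k) :
    Fine (⇑(γ.trans η')) U (2*k) ∧
      P f (γ.trans η') (2*k) = P f γ k * P f η k := by
  obtain ⟨hk0, hγf⟩ := hγ
  obtain ⟨-, hηf⟩ := hη
  have hk0' : (0:ℝ) < k := by exact_mod_cast hk0
  -- values of the concatenation at partition points
  have TA : ∀ i : ℕ, i ≤ k → (γ.trans η') (pt (k+k) i) = γ (pt k i) := by
    intro i hi
    rw [Path.trans_apply]
    have hcoe : ((pt (k+k) i : I) : ℝ) = (i:ℝ) / (2*k) := by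
      rw [pt_coe_of_le (by omega)]; push_cast; ring_nf
    have hle : ((pt (k+k) i : I) : ℝ) ≤ 1/2 := by
      rw [hcoe, div_le_div_iff₀ (by positivity) two_pos]
      have : (i:ℝ) ≤ k := by exact_mod_cast hi
      linarith
    rw [dif_pos hle]
    congr 1
    ext
    simp only
    rw [hcoe, pt_coe_of_le hi]
    field_simp
  have TB : ∀ i : ℕ, k ≤ i → i ≤ 2*k →
      (γ.trans η') (pt (k+k) i) = g * η (pt k (i - k)) := by
    intro i hki hi
    rcases eq_or_lt_of_le hki with heq | hki'
    · rw [← heq, TA k le_rfl, Nat.sub_self, pt_zero, pt_self hk0, Path.target, Path.source,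
        mul_one]
    · rw [Path.trans_apply]
      have hcoe : ((pt (k+k) i : I) : ℝ) = (i:ℝ) / (2*k) := by
        rw [pt_coe_of_le (by omega)]; push_cast; ring_nf
      have hgt : ¬ ((pt (k+k) i : I) : ℝ) ≤ 1/2 := by
        rw [hcoe, not_le, div_lt_div_iff₀ two_pos (by positivity)]
        have : (k:ℝ) < i := by exact_mod_cast hki'
        linarith
      rw [dif_neg hgt, heq]
      congr 2
      ext
      simp only
      rw [hcoe, pt_coe_of_le (by omega), Nat.cast_sub hki]
      field_simp
  constructor
  · -- fineness of the concatenation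
    refine ⟨by omega, fun s t hst => ?_⟩
    have hst' : |(s:ℝ) - (t:ℝ)| ≤ 1/(2*(k:ℝ)) := by
      rw [Subtype.dist_eq, Real.dist_eq] at hst
      calc |(s:ℝ) - t| ≤ 1/((2*k : ℕ):ℝ) := hst
        _ = 1/(2*(k:ℝ)) := by push_cast; ring_nf
    have habs := abs_le.mp hst'
    have hr0 : (0:ℝ) ≤ 1/(2*(k:ℝ)) := by positivity
    have hsplit : (1:ℝ)/(k:ℝ) = 2*(1/(2*(k:ℝ))) := by field_simp
    rw [Path.trans_apply, Path.trans_apply]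
    by_cases hs : (s:ℝ) ≤ 1/2 <;> by_cases ht : (t:ℝ) ≤ 1/2
    · rw [dif_pos hs, dif_pos ht]
      refine hWU (hγf _ _ ?_)
      rw [Subtype.dist_eq, Real.dist_eq]
      show |2*(s:ℝ) - 2*(t:ℝ)| ≤ 1/(k:ℝ)
      rw [hsplit, abs_le]
      constructor <;> linarith [habs.1, habs.2]
    · rw [dif_pos hs, dif_neg ht, heq]
      have e1 : ∀ A B : G, A⁻¹ * (g * B) = (A⁻¹ * γ 1) * ((η 0)⁻¹ * B) := by
        intro A B
        rw [Path.target, Path.source]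
        group
      rw [e1]
      push_neg at ht
      refine hWW U W h1W hW3 _ (hγf _ _ ?_) _ (hηf _ _ ?_)
      · rw [Subtype.dist_eq, Real.dist_eq]
        show |2*(s:ℝ) - ((1:I):ℝ)| ≤ 1/(k:ℝ)
        rw [Set.Icc.coe_one, hsplit, abs_le]
        constructor <;> linarith [habs.1, habs.2]
      · rw [Subtype.dist_eq, Real.dist_eq]
        show |((0:I):ℝ) - (2*(t:ℝ) - 1)| ≤ 1/(k:ℝ)
        rw [Set.Icc.coe_zero, hsplit, abs_le]
        constructor <;> linarith [habs.1, habs.2]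
    · rw [dif_neg hs, dif_pos ht, heq]
      have e1 : ∀ A B : G, (g * A)⁻¹ * B = ((η 0)⁻¹ * A)⁻¹ * (B⁻¹ * γ 1)⁻¹ := by
        intro A B
        rw [Path.target, Path.source]
        group
      rw [e1]
      push_neg at hs
      refine hWW U W h1W hW3 _ (hWsym _ (hηf _ _ ?_)) _ (hWsym _ (hγf _ _ ?_))
      · rw [Subtype.dist_eq, Real.dist_eq]
        show |((0:I):ℝ) - (2*(s:ℝ) - 1)| ≤ 1/(k:ℝ)
        rw [Set.Icc.coe_zero, hsplit, abs_le]
        constructor <;> linarith [habs.1, habs.2]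
      · rw [Subtype.dist_eq, Real.dist_eq]
        show |2*(t:ℝ) - ((1:I):ℝ)| ≤ 1/(k:ℝ)
        rw [Set.Icc.coe_one, hsplit, abs_le]
        constructor <;> linarith [habs.1, habs.2]
    · rw [dif_neg hs, dif_neg ht, heq, heq]
      have e1 : ∀ A B : G, (g * A)⁻¹ * (g * B) = A⁻¹ * B := by
        intro A B
        group
      rw [e1]
      refine hWU (hηf _ _ ?_)
      rw [Subtype.dist_eq, Real.dist_eq]
      show |(2*(s:ℝ) - 1) - (2*(t:ℝ) - 1)| ≤ 1/(k:ℝ)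
      rw [hsplit, abs_le]
      constructor <;> linarith [habs.1, habs.2]
  · -- the product splits
    show Pr _ (2*k) = _
    rw [show 2*k = k + k by ring, Pr_add]
    congr 1
    · exact Pr_congr fun i hi => by rw [TA i (by omega), TA (i+1) (by omega)]
    · refine Pr_congr fun i hi => ?_
      rw [TB (k+i) (by omega) (by omega), TB (k+i+1) (by omega) (by omega),
        show k+i-k = i by omega, show k+i+1-k = i+1 by omega]
      congr 1
      group

end Trans

end LocalHomExt

open LocalHomExt in
/-- a continuous local homomorphism `f`, defined on a symmetric open
connected neighbourhood `U` of the identity of a simply connected topological group `G`,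
with values in a topological group `H`, extends uniquely to a continuous group
homomorphism `G →* H`. -/
theorem local_hom_extends
    {G H : Type} [TopologicalSpace G] [Group G] [IsTopologicalGroup G]
    [TopologicalSpace H] [Group H] [IsTopologicalGroup H]
    [SimplyConnectedSpace G] [LocallyPathConnectedSpace G]
    (U : Set G) (hU : IsOpen U) (h1U : (1 : G) ∈ U) (hsymm : U⁻¹ = U)
    (hconn : IsConnected U)
    (f : G → H) (hf : ContinuousOn f U)
    (hhom : ∀ x y : G, x ∈ U → y ∈ U → x * y ∈ U → f (x * y) = f x * f y) :
    ∃! F : G →* H, Continuous F ∧ ∀ x ∈ U, F x = f x := by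
  classical
  -- construct a small symmetric neighbourhood `W` of `1`
  obtain ⟨V₁, hV₁o, hV₁1, hV₁⟩ := exists_open_nhds_one_mul_subset (hU.mem_nhds h1U)
  obtain ⟨V₂, hV₂o, hV₂1, hV₂⟩ := exists_open_nhds_one_mul_subset (hV₁o.mem_nhds hV₁1)
  set W : Set G := V₂ ∩ V₂⁻¹ with hWdef
  have hWo : IsOpen W := hV₂o.inter hV₂o.inv
  have h1W : (1:G) ∈ W := ⟨hV₂1, by simpa using hV₂1⟩
  have hWsym : ∀ w ∈ W, w⁻¹ ∈ W := fun w hw =>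
    ⟨Set.mem_inv.mp hw.2, Set.mem_inv.mpr (by simpa using hw.1)⟩
  have hV₂V₁ : V₂ ⊆ V₁ := fun x hx => by
    have := hV₂ (Set.mul_mem_mul hx hV₂1); rwa [mul_one] at this
  have hV₁U : V₁ ⊆ U := fun x hx => by
    have := hV₁ (Set.mul_mem_mul hx hV₁1); rwa [mul_one] at this
  have hWU : W ⊆ U := fun x hx => hV₁U (hV₂V₁ hx.1)
  have hW3 : ∀ a b c : G, a ∈ W → b ∈ W → c ∈ W → a*b*c ∈ U := fun a b c ha hb hc =>
    hV₁ (Set.mul_mem_mul (hV₂ (Set.mul_mem_mul ha.1 hb.1)) (hV₂V₁ hc.1))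
  -- define the extension via products along paths
  have hex : ∀ g : G, ∃ p : Path (1:G) g × ℕ, Fine (⇑p.1) U p.2 := by
    intro g
    have γ := PathConnectedSpace.somePath (1:G) g
    obtain ⟨N, hN⟩ := exists_fine (⇑γ) γ.continuous U hU h1U
    exact ⟨(γ, N), hN N le_rfl⟩
  choose pa hpa using hex
  set E : G → H := fun g => P f (⇑(pa g).1) (pa g).2 with hEdef
  have EXT : ∀ (g : G) (γ : Path (1:G) g) (n : ℕ), Fine (⇑γ) U n → E g = P f γ n := by
    intro g γ n hn
    exact P_homotopic f U h1U hhom W hWo h1W hWU hWsym hW3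
      (SimplyConnectedSpace.paths_homotopic (pa g).1 γ) (hpa g) hn
  -- E 1 = 1
  have hE1 : E 1 = 1 := by
    have hfine : Fine (⇑(Path.refl (1:G))) U 1 :=
      ⟨one_pos, fun s t _ => by simpa using h1U⟩
    rw [EXT 1 (Path.refl 1) 1 hfine]
    show Pr _ 1 = 1
    rw [Pr_succ, Pr_zero, one_mul]
    simpa using f_one U h1U f hhom
  -- E is multiplicative
  have hEmul : ∀ a b : G, E (a*b) = E a * E b := by
    intro a b
    set γ : Path (1:G) a := (pa a).1 with hγdef
    set η : Path (1:G) b := (pa b).1 with hηdef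
    let η' : Path a (a*b) :=
      { toFun := fun t => a * η t
        continuous_toFun := continuous_const.mul η.continuous
        source' := by simp
        target' := by simp }
    obtain ⟨N₁, hN₁⟩ := exists_fine (⇑γ) γ.continuous W hWo h1W
    obtain ⟨N₂, hN₂⟩ := exists_fine (⇑η) η.continuous W hWo h1W
    set k := max (max N₁ N₂) 1 with hkdef
    have hγW : Fine (⇑γ) W k := hN₁ k (by omega)
    have hηW : Fine (⇑η) W k := hN₂ k (by omega)
    obtain ⟨hτfine, hτP⟩ := P_trans f U W h1W hWU hWsym hW3 γ η η'
      (fun t => rfl) hγW hηW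
    rw [EXT (a*b) (γ.trans η') (2*k) hτfine, hτP,
      ← EXT a γ k (hγW.mono hWU le_rfl), ← EXT b η k (hηW.mono hWU le_rfl)]
  -- E = f near 1
  obtain ⟨sN, ⟨hsN_nhds, hsN_pc⟩, hsNW⟩ :=
    (path_connected_basis (1:G)).mem_iff.mp (hWo.mem_nhds h1W)
  have h1s : (1:G) ∈ sN := mem_of_mem_nhds hsN_nhds
  have hEf_s : ∀ x ∈ sN, E x = f x := by
    intro x hx
    obtain ⟨γ, hγmem⟩ := hsN_pc.joinedIn 1 h1s x hx
    have hfineU : Fine (⇑γ) U 1 :=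
      ⟨one_pos, fun s t _ =>
        hWW U W h1W hW3 _ (hWsym _ (hsNW (hγmem s))) _ (hsNW (hγmem t))⟩
    rw [EXT x γ 1 hfineU]
    show Pr _ 1 = f x
    rw [Pr_succ, Pr_zero, one_mul, pt_zero]
    show f ((γ 0)⁻¹ * γ (pt 1 1)) = f x
    rw [pt_self one_pos, Path.source, Path.target, inv_one, one_mul]
  -- a smaller symmetric neighbourhood inside `sN`
  obtain ⟨O, hOs, hOo, h1O⟩ := mem_nhds_iff.mp hsN_nhds
  set W' : Set G := O ∩ O⁻¹ with hW'def
  have hW'o : IsOpen W' := hOo.inter hOo.inv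
  have h1W' : (1:G) ∈ W' := ⟨h1O, by simpa using h1O⟩
  have hW'sym : ∀ w ∈ W', w⁻¹ ∈ W' := fun w hw =>
    ⟨Set.mem_inv.mp hw.2, Set.mem_inv.mpr (by simpa using hw.1)⟩
  have hW'sN : W' ⊆ sN := fun x hx => hOs hx.1
  have hW'U : W' ⊆ U := fun x hx => hWU (hsNW (hW'sN hx))
  -- propagation of `E = f` within `U`
  have hprop : ∀ x ∈ U, ∀ y ∈ U, x⁻¹ * y ∈ W' → E x = f x → E y = f y := by
    intro x hx y hy hxy hEx
    have h1 : E y = E x * E (x⁻¹ * y) := by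
      rw [← hEmul]
      congr 1
      group
    have h2 : E (x⁻¹*y) = f (x⁻¹*y) := hEf_s _ (hW'sN hxy)
    have h3 : x * (x⁻¹ * y) ∈ U := by
      rw [show x*(x⁻¹*y) = y by group]; exact hy
    rw [h1, hEx, h2, ← hhom x (x⁻¹*y) hx (hW'U hxy) h3,
      show x*(x⁻¹*y) = y by group]
  -- `E = f` on all of `U` by connectedness
  have hEfU : ∀ x ∈ U, E x = f x := by
    by_contra hcon
    push_neg at hcon
    obtain ⟨x₀, hx₀U, hx₀⟩ := hcon
    set A : Set G := {x | x ∈ U ∧ E x = f x} with hAdef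
    set S₁ : Set G := ⋃ x ∈ A, (fun z => x * z) '' W' with hS₁def
    set S₂ : Set G := ⋃ x ∈ (U \ A), (fun z => x * z) '' W' with hS₂def
    have hS₁o : IsOpen S₁ := isOpen_biUnion fun x _ => (isOpenMap_mul_left x) W' hW'o
    have hS₂o : IsOpen S₂ := isOpen_biUnion fun x _ => (isOpenMap_mul_left x) W' hW'o
    have hmemS : ∀ (x z : G), z ∈ (fun z => x * z) '' W' → x⁻¹ * z ∈ W' := by
      rintro x z ⟨w, hw, rfl⟩
      simpa using hw
    have hself : ∀ x : G, x ∈ (fun z => x * z) '' W' := fun x => ⟨1, h1W', mul_one x⟩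
    have hcover : U ⊆ S₁ ∪ S₂ := by
      intro x hx
      by_cases hxA : x ∈ A
      · exact Or.inl (Set.mem_biUnion hxA (hself x))
      · exact Or.inr (Set.mem_biUnion ⟨hx, hxA⟩ (hself x))
    have hne₁ : (U ∩ S₁).Nonempty :=
      ⟨1, h1U, Set.mem_biUnion ⟨h1U, by rw [hE1, f_one U h1U f hhom]⟩ (hself 1)⟩
    have hne₂ : (U ∩ S₂).Nonempty :=
      ⟨x₀, hx₀U, Set.mem_biUnion ⟨hx₀U, fun h => hx₀ h.2⟩ (hself x₀)⟩
    obtain ⟨z, hzU, hz₁, hz₂⟩ := hconn.isPreconnected S₁ S₂ hS₁o hS₂o hcover hne₁ hne₂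
    obtain ⟨x, hxA, hzx⟩ := Set.mem_iUnion₂.mp hz₁
    obtain ⟨x', hx'B, hzx'⟩ := Set.mem_iUnion₂.mp hz₂
    have hzA : E z = f z := hprop x hxA.1 z hzU (hmemS x z hzx) hxA.2
    have : E x' = f x' := by
      refine hprop z hzU x' hx'B.1 ?_ hzA
      have := hW'sym _ (hmemS x' z hzx')
      simpa [mul_inv_rev] using this
    exact hx'B.2 ⟨hx'B.1, this⟩
  -- assemble the monoid hom
  set F : G →* H := MonoidHom.mk' E hEmul with hFdef
  have hFcoe : ∀ x, F x = E x := fun x => rfl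
  have hcont : Continuous F := by
    apply continuous_of_continuousAt_one F
    have hfc : ContinuousAt f 1 := hf.continuousAt (hU.mem_nhds h1U)
    have hev : f =ᶠ[nhds (1:G)] ⇑F :=
      Filter.eventuallyEq_of_mem hsN_nhds (fun x hx => ((hEf_s x hx)).symm)
    exact hfc.congr hev
  refine ⟨F, ⟨hcont, fun x hx => hEfU x hx⟩, ?_⟩
  rintro F' ⟨hF'c, hF'U⟩
  have htop : Subgroup.closure U = ⊤ := by
    have hopen : IsOpen ((Subgroup.closure U : Subgroup G) : Set G) :=
      Subgroup.isOpen_of_mem_nhds _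
        (Filter.mem_of_superset (hU.mem_nhds h1U) Subgroup.subset_closure)
    have hclosed : IsClosed ((Subgroup.closure U : Subgroup G) : Set G) :=
      Subgroup.isClosed_of_isOpen _ hopen
    have huniv : ((Subgroup.closure U : Subgroup G) : Set G) = Set.univ :=
      IsClopen.eq_univ ⟨hclosed, hopen⟩ ⟨1, Subgroup.one_mem _⟩
    rw [Subgroup.eq_top_iff']
    intro x
    have : x ∈ ((Subgroup.closure U : Subgroup G) : Set G) := huniv ▸ Set.mem_univ x
    exact this
  ext x
  have hx : x ∈ Subgroup.closure U := htop ▸ Subgroup.mem_top x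
  refine Subgroup.closure_induction (p := fun g _ => F' g = F g) ?_ ?_ ?_ ?_ hx
  · intro u hu
    rw [hF'U u hu, hFcoe, hEfU u hu]
  · simp
  · intro a b _ _ ha hb
    rw [map_mul, map_mul, ha, hb]
  · intro a _ ha
    rw [map_inv, map_inv, ha]
end

section
/- Two simply connected topological groups that are locally isomorphic are isomorphic as topological groups. -/
open unitInterval Set

namespace MonodromyAux

variable {G H : Type} [Group G] [Group H]

/-- ordered product `a 0 * a 1 * ⋯ * a (n-1)`. -/
def cprod (a : ℕ → H) : ℕ → H
  | 0 => 1
  | n + 1 => cprod a n * a n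

lemma cprod_succ (a : ℕ → H) (n : ℕ) : cprod a (n+1) = cprod a n * a n := rfl

lemma cprod_add (a : ℕ → H) (m n : ℕ) :
    cprod a (m + n) = cprod a m * cprod (fun i => a (m + i)) n := by
  induction n with
  | zero => simp [cprod]
  | succ n ih => rw [← Nat.add_assoc, cprod_succ, ih, cprod_succ, mul_assoc]

lemma cprod_congr {a b : ℕ → H} (n : ℕ) (h : ∀ i < n, a i = b i) :
    cprod a n = cprod b n := by
  induction n with
  | zero => rfl
  | succ n ih =>
    rw [cprod_succ, cprod_succ, ih (fun i hi => h i (hi.trans n.lt_succ_self)),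
      h n n.lt_succ_self]

/-- the point `i/n` of the unit interval. -/
noncomputable def pt (n i : ℕ) : I := Set.projIcc 0 1 zero_le_one ((i : ℝ) / (n : ℝ))

lemma pt_coe {n i : ℕ} (hn : n ≠ 0) (h : i ≤ n) : ((pt n i : I) : ℝ) = (i : ℝ) / n := by
  have hn' : (0:ℝ) < n := by positivity
  have h1 : (0:ℝ) ≤ (i:ℝ)/n := by positivity
  have h2 : (i:ℝ)/n ≤ 1 := by
    rw [div_le_one hn']; exact_mod_cast h
  simp [pt, Set.projIcc_of_mem zero_le_one ⟨h1, h2⟩]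

lemma pt_zero (n : ℕ) : pt n 0 = 0 := by
  simp [pt]

lemma pt_self {n : ℕ} (hn : n ≠ 0) : pt n n = 1 := by
  have : ((n:ℝ))/n = 1 := div_self (by exact_mod_cast hn)
  simp [pt, this]

lemma pt_mul {n k i : ℕ} (hk : k ≠ 0) : pt (n * k) (i * k) = pt n i := by
  unfold pt
  congr 1
  push_cast
  rw [mul_comm (n:ℝ) k, mul_comm (i:ℝ) k, mul_div_mul_left _ _ (by exact_mod_cast hk)]

/-- `γ` is `S`-fine for the uniform partition of mesh `1/n` :
all increments of `γ` within each block lie in `S`. -/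
def Fine (S : Set G) (γ : I → G) (n : ℕ) : Prop :=
  ∀ i : ℕ, i < n → ∀ s t : I, ((i:ℝ)/n ≤ (s:ℝ)) → ((s:ℝ) ≤ ((i:ℝ)+1)/n) →
    ((i:ℝ)/n ≤ (t:ℝ)) → ((t:ℝ) ≤ ((i:ℝ)+1)/n) → (γ s)⁻¹ * γ t ∈ S

/-- development of the path `γ` along the uniform partition of mesh `1/n`. -/
noncomputable def dev (f : G → H) (γ : I → G) (n : ℕ) : H :=
  cprod (fun i => f ((γ (pt n i))⁻¹ * γ (pt n (i + 1)))) n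

section dev

variable {U : Set G} {f : G → H}
  (hfhom : ∀ x y : G, x ∈ U → y ∈ U → x * y ∈ U → f (x * y) = f x * f y)
  (h1U : (1:G) ∈ U)

include hfhom h1U

lemma f_one : f 1 = 1 := by
  have := hfhom 1 1 h1U h1U (by simpa using h1U)
  simpa using this.symm

lemma telescope (z : ℕ → G) (k : ℕ)
    (hz : ∀ a b, a ≤ b → b ≤ k → (z a)⁻¹ * z b ∈ U) :
    cprod (fun j => f ((z j)⁻¹ * z (j + 1))) k = f ((z 0)⁻¹ * z k) := by
  induction k with
  | zero => simp [cprod, f_one hfhom h1U]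
  | succ k ih =>
    rw [cprod_succ, ih (fun a b hab hb => hz a b hab (hb.trans k.le_succ))]
    rw [← hfhom _ _ (hz 0 k (Nat.zero_le _) k.le_succ) (hz k (k+1) k.le_succ le_rfl)
      (by have := hz 0 (k+1) (Nat.zero_le _) le_rfl
          rwa [show (z 0)⁻¹ * z (k+1) = (z 0)⁻¹ * z k * ((z k)⁻¹ * z (k+1)) by group] at this)]
    congr 1
    group

end dev

end MonodromyAux

namespace MonodromyAux

variable {G H : Type} [Group G] [Group H]

lemma block_bounds {n k m a : ℕ} (hn : n ≠ 0) (hk : k ≠ 0) (ha : a ≤ k) (hm : m < n) :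
    ((m:ℝ)/n ≤ ((pt (n*k) (m*k+a) : I) : ℝ)) ∧ (((pt (n*k) (m*k+a) : I) : ℝ) ≤ ((m:ℝ)+1)/n) := by
  have hnk : n * k ≠ 0 := Nat.mul_ne_zero hn hk
  have hle : m*k + a ≤ n*k := by
    calc m*k + a ≤ m*k + k := by omega
    _ = (m+1)*k := by ring
    _ ≤ n*k := Nat.mul_le_mul_right _ (by omega)
  rw [pt_coe hnk hle]
  have h1 : (0:ℝ) < n := by positivity
  have h2 : (0:ℝ) < k := by positivity
  have h3 : (0:ℝ) < (n*k:ℕ) := by positivity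
  push_cast
  constructor
  · rw [div_le_div_iff₀ h1 (by positivity)]
    nlinarith [h2, (Nat.cast_nonneg a : (0:ℝ) ≤ a)]
  · rw [div_le_div_iff₀ (by positivity) h1]
    have : (a:ℝ) ≤ k := by exact_mod_cast ha
    nlinarith

section dev

variable {U : Set G} {f : G → H}
  (hfhom : ∀ x y : G, x ∈ U → y ∈ U → x * y ∈ U → f (x * y) = f x * f y)
  (h1U : (1:G) ∈ U)

include hfhom h1U

lemma dev_refine {γ : I → G} {n k : ℕ} (hn : n ≠ 0) (hk : k ≠ 0)
    (hfine : Fine U γ n) : dev f γ (n * k) = dev f γ n := by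
  unfold dev
  suffices h : ∀ m, m ≤ n → cprod (fun j => f ((γ (pt (n*k) j))⁻¹ * γ (pt (n*k) (j+1)))) (m*k)
      = cprod (fun i => f ((γ (pt n i))⁻¹ * γ (pt n (i + 1)))) m by
    exact h n le_rfl
  intro m hm
  induction m with
  | zero => simp [cprod]
  | succ m ih =>
    have hmn : m < n := hm
    rw [show (m+1)*k = m*k + k by ring, cprod_add, ih (le_of_lt hmn), cprod_succ]
    congr 1
    have : ∀ r, (fun r => f ((γ (pt (n*k) (m*k + r)))⁻¹ * γ (pt (n*k) (m*k + r + 1)))) r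
        = (fun r => f ((γ (pt (n*k) (m*k + r)))⁻¹ * γ (pt (n*k) (m*k + (r + 1))))) r := by
      intro r; simp [Nat.add_assoc]
    rw [cprod_congr _ (fun i _ => this i)]
    rw [telescope hfhom h1U (fun r => γ (pt (n*k) (m*k + r))) k ?memb]
    · congr 2
      · rw [show m*k + 0 = m*k by ring, pt_mul hk]
      · rw [show m*k + k = (m+1)*k by ring, pt_mul hk]
    · intro a b hab hb
      exact hfine m hmn _ _ (block_bounds hn hk (hab.trans hb) hmn).1
        (block_bounds hn hk (hab.trans hb) hmn).2
        (block_bounds hn hk hb hmn).1 (block_bounds hn hk hb hmn).2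

lemma dev_eq_of_fine {γ : I → G} {n m : ℕ} (hn : n ≠ 0) (hm : m ≠ 0)
    (hfn : Fine U γ n) (hfm : Fine U γ m) : dev f γ n = dev f γ m := by
  rw [← dev_refine hfhom h1U hn hm hfn, mul_comm, dev_refine hfhom h1U hm hn hfm]

end dev

end MonodromyAux

namespace MonodromyAux

variable {G H : Type} [Group G] [TopologicalSpace G] [IsTopologicalGroup G] [Group H]

/-- Lebesgue-number style uniformity: a continuous map from `I × I` into a topological
group has all its small-scale increments inside a given neighbourhood of `1`. -/
lemma exists_unif {S : Set G} (hS : S ∈ nhds (1:G)) {Φ : I × I → G} (hΦ : Continuous Φ) :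
    ∃ n : ℕ, n ≠ 0 ∧ ∀ p q : I × I, dist p q ≤ 1/(n:ℝ) → (Φ p)⁻¹ * Φ q ∈ S := by
  obtain ⟨V, hVopen, hV1, hVmul⟩ := exists_open_nhds_one_mul_subset hS
  set W : Set G := V ∩ V⁻¹ with hW
  have hWopen : IsOpen W := hVopen.inter (hVopen.preimage continuous_inv)
  have hW1 : (1:G) ∈ W := ⟨hV1, by simpa using hV1⟩
  set u : I × I → Set (I × I) := fun c => {q | (Φ c)⁻¹ * Φ q ∈ W} with hu
  have huopen : ∀ c, IsOpen (u c) :=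
    fun c => hWopen.preimage (by continuity)
  have hucov : (Set.univ : Set (I × I)) ⊆ ⋃ c, u c := by
    intro p _
    exact Set.mem_iUnion.2 ⟨p, by simp [hu, hW1]⟩
  obtain ⟨δ, hδ, hball⟩ := lebesgue_number_lemma_of_metric isCompact_univ huopen hucov
  obtain ⟨n, hn⟩ := exists_nat_one_div_lt hδ
  refine ⟨n + 1, Nat.succ_ne_zero n, fun p q hpq => ?_⟩
  obtain ⟨c, hc⟩ := hball p (Set.mem_univ p)
  have hp : p ∈ u c := hc (Metric.mem_ball_self hδ)
  have hq : q ∈ u c := hc (by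
    rw [Metric.mem_ball, dist_comm]
    calc dist p q ≤ 1/((n:ℝ)+1) := by exact_mod_cast hpq
    _ < δ := hn)
  have : (Φ p)⁻¹ * Φ q = ((Φ c)⁻¹ * Φ p)⁻¹ * ((Φ c)⁻¹ * Φ q) := by group
  rw [this]
  exact hVmul (Set.mul_mem_mul (by simpa using hp.2) hq.1)

variable [TopologicalSpace H]

section ladder

variable {U : Set G} {f : G → H}
  (hfhom : ∀ x y : G, x ∈ U → y ∈ U → x * y ∈ U → f (x * y) = f x * f y)
  (h1U : (1:G) ∈ U)

include hfhom h1U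

omit [TopologicalSpace G] [IsTopologicalGroup G] [TopologicalSpace H] in
/-- the ladder lemma: developments along two adjacent rows of a fine grid agree. -/
lemma ladder (x y : ℕ → G) (n : ℕ) (h0 : x 0 = y 0) (hn : x n = y n)
    (hr : ∀ i, i ≤ n → (x i)⁻¹ * y i ∈ U)
    (ha : ∀ i, i < n → (x i)⁻¹ * x (i+1) ∈ U)
    (hb : ∀ i, i < n → (y i)⁻¹ * y (i+1) ∈ U)
    (hd : ∀ i, i < n → (x i)⁻¹ * y (i+1) ∈ U) :
    cprod (fun i => f ((x i)⁻¹ * x (i+1))) n = cprod (fun i => f ((y i)⁻¹ * y (i+1))) n := by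
  have key : ∀ j, j ≤ n → cprod (fun i => f ((x i)⁻¹ * x (i+1))) j * f ((x j)⁻¹ * y j)
      = cprod (fun i => f ((y i)⁻¹ * y (i+1))) j := by
    intro j hj
    induction j with
    | zero =>
      simp [cprod, h0, f_one hfhom h1U]
    | succ j ih =>
      have hjn : j < n := hj
      rw [cprod_succ, cprod_succ, ← ih (le_of_lt hjn), mul_assoc, mul_assoc]
      congr 1
      have e1 : f ((x j)⁻¹ * x (j+1)) * f ((x (j+1))⁻¹ * y (j+1)) = f ((x j)⁻¹ * y (j+1)) := by
        rw [← hfhom _ _ (ha j hjn) (hr (j+1) hj) (by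
          have := hd j hjn
          rwa [show (x j)⁻¹ * y (j+1) = ((x j)⁻¹ * x (j+1)) * ((x (j+1))⁻¹ * y (j+1)) by group]
            at this)]
        congr 1; group
      have e2 : f ((x j)⁻¹ * y j) * f ((y j)⁻¹ * y (j+1)) = f ((x j)⁻¹ * y (j+1)) := by
        rw [← hfhom _ _ (hr j (le_of_lt hjn)) (hb j hjn) (by
          have := hd j hjn
          rwa [show (x j)⁻¹ * y (j+1) = ((x j)⁻¹ * y j) * ((y j)⁻¹ * y (j+1)) by group]
            at this)]
        congr 1; group
      rw [e1, e2]
  have := key n le_rfl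
  rwa [hn, inv_mul_cancel, f_one hfhom h1U, mul_one] at this

end ladder

end MonodromyAux

namespace MonodromyAux

variable {G H : Type} [Group G] [TopologicalSpace G] [IsTopologicalGroup G] [Group H]

section homotopy

variable {U : Set G} {f : G → H}
  (hfhom : ∀ x y : G, x ∈ U → y ∈ U → x * y ∈ U → f (x * y) = f x * f y)
  (h1U : (1:G) ∈ U) (hUnhds : U ∈ nhds (1:G))

omit [TopologicalSpace G] [IsTopologicalGroup G] in
lemma fine_of_unif {γ : I → G} {n : ℕ} (hn : n ≠ 0)
    (h : ∀ s t : I, dist s t ≤ 1/(n:ℝ) → (γ s)⁻¹ * γ t ∈ U) : Fine U γ n := by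
  intro i _ s t hs1 hs2 ht1 ht2
  refine h s t ?_
  have hn' : (0:ℝ) < n := by positivity
  have hdiff : ((i:ℝ)+1)/n - (i:ℝ)/n = 1/n := by field_simp; ring
  rw [Subtype.dist_eq, Real.dist_eq, abs_sub_le_iff]
  constructor <;> linarith

include hUnhds in
lemma exists_fine_path (γ : I → G) (hγ : Continuous γ) :
    ∃ n : ℕ, n ≠ 0 ∧ Fine U γ n := by
  obtain ⟨n, hn0, hn⟩ := exists_unif hUnhds (hγ.comp continuous_snd)
  refine ⟨n, hn0, fine_of_unif hn0 fun s t hst => ?_⟩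
  exact hn ((0:I), s) ((0:I), t) (by simpa [Prod.dist_eq] using hst)

lemma grid_dist {N a b : ℕ} (hab : (a:ℝ) - b ≤ 1) (hba : (b:ℝ) - a ≤ 1) (hN : N ≠ 0) :
    dist (pt N a) (pt N b) ≤ 1/(N:ℝ) := by
  have hN' : (0:ℝ) < N := by positivity
  calc dist (pt N a) (pt N b) ≤ dist ((a:ℝ)/N) ((b:ℝ)/N) := by
        simpa [pt] using (LipschitzWith.projIcc (zero_le_one)).dist_le_mul ((a:ℝ)/N) ((b:ℝ)/N)
  _ ≤ 1/(N:ℝ) := by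
      rw [Real.dist_eq, div_sub_div_same, abs_div, abs_of_pos hN',
        div_le_div_iff₀ (by positivity) hN']
      have habs : |(a:ℝ) - b| ≤ 1 := abs_sub_le_iff.2 ⟨hab, hba⟩
      nlinarith

include hfhom h1U hUnhds

lemma dev_eq_of_homotopic [SimplyConnectedSpace G] {x : G} (p q : Path (1:G) x)
    {n m : ℕ} (hn : n ≠ 0) (hm : m ≠ 0) (hfp : Fine U ⇑p n) (hfq : Fine U ⇑q m) :
    dev f ⇑p n = dev f ⇑q m := by
  obtain ⟨Hm⟩ : Path.Homotopic p q := SimplyConnectedSpace.paths_homotopic p q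
  obtain ⟨N, hN0, hNu⟩ := exists_unif hUnhds Hm.continuous
  -- increments between neighbouring grid points lie in U
  have hgrid : ∀ a b a' b' : ℕ, (a:ℝ) - a' ≤ 1 → (a':ℝ) - a ≤ 1 → (b:ℝ) - b' ≤ 1 →
      (b':ℝ) - b ≤ 1 → (Hm (pt N a, pt N b))⁻¹ * Hm (pt N a', pt N b') ∈ U := by
    intro a b a' b' h1 h2 h3 h4
    refine hNu _ _ ?_
    rw [Prod.dist_eq]
    exact max_le (grid_dist h1 h2 hN0) (grid_dist h3 h4 hN0)
  -- developments of consecutive rows agree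
  have hrow : ∀ j, j ≤ N →
      cprod (fun i => f ((Hm (pt N j, pt N i))⁻¹ * Hm (pt N j, pt N (i+1)))) N
      = cprod (fun i => f ((Hm (pt N 0, pt N i))⁻¹ * Hm (pt N 0, pt N (i+1)))) N := by
    intro j hj
    induction j with
    | zero => rfl
    | succ j ih =>
      rw [← ih (le_of_lt hj)]
      refine ladder hfhom h1U (fun i => Hm (pt N (j+1), pt N i))
        (fun i => Hm (pt N j, pt N i)) N ?_ ?_ ?_ ?_ ?_ ?_
      · show Hm ((pt N (j+1)), pt N 0) = Hm ((pt N j), pt N 0)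
        rw [pt_zero, Path.Homotopy.source, Path.Homotopy.source]
      · show Hm ((pt N (j+1)), pt N N) = Hm ((pt N j), pt N N)
        rw [pt_self hN0, Path.Homotopy.target, Path.Homotopy.target]
      · intro i _
        exact hgrid _ _ _ _ (by push_cast; linarith) (by push_cast; linarith)
          (by push_cast; linarith) (by push_cast; linarith)
      · intro i _
        exact hgrid _ _ _ _ (by push_cast; linarith) (by push_cast; linarith)
          (by push_cast; linarith) (by push_cast; linarith)
      · intro i _
        exact hgrid _ _ _ _ (by push_cast; linarith) (by push_cast; linarith)
          (by push_cast; linarith) (by push_cast; linarith)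
      · intro i _
        exact hgrid _ _ _ _ (by push_cast; linarith) (by push_cast; linarith)
          (by push_cast; linarith) (by push_cast; linarith)
  -- row 0 is p, row N is q
  have hrow0 : ∀ t : I, Hm (pt N 0, t) = p t := by
    intro t; rw [pt_zero]; exact Hm.apply_zero t
  have hrowN : ∀ t : I, Hm (pt N N, t) = q t := by
    intro t; rw [pt_self hN0]; exact Hm.apply_one t
  have hfineP : Fine U ⇑p N := by
    refine fine_of_unif hN0 fun s t hst => ?_
    have := hNu ((0:I), s) ((0:I), t) (by simpa [Prod.dist_eq] using hst)
    simpa [Hm.apply_zero] using this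
  have hfineQ : Fine U ⇑q N := by
    refine fine_of_unif hN0 fun s t hst => ?_
    have := hNu ((1:I), s) ((1:I), t) (by simpa [Prod.dist_eq] using hst)
    simpa [Hm.apply_one] using this
  calc dev f ⇑p n = dev f ⇑p N := dev_eq_of_fine hfhom h1U hn hN0 hfp hfineP
  _ = cprod (fun i => f ((Hm (pt N 0, pt N i))⁻¹ * Hm (pt N 0, pt N (i+1)))) N := by
      unfold dev; exact cprod_congr _ (fun i _ => by rw [hrow0, hrow0])
  _ = cprod (fun i => f ((Hm (pt N N, pt N i))⁻¹ * Hm (pt N N, pt N (i+1)))) N :=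
      (hrow N le_rfl).symm
  _ = dev f ⇑q N := by
      unfold dev; exact cprod_congr _ (fun i _ => by rw [hrowN, hrowN])
  _ = dev f ⇑q m := dev_eq_of_fine hfhom h1U hN0 hm hfineQ hfq

end homotopy

end MonodromyAux

namespace MonodromyAux

section extension

variable {G H : Type} [TopologicalSpace G] [Group G] [IsTopologicalGroup G]
  [TopologicalSpace H] [Group H] [IsTopologicalGroup H]

/-- left translate of a path starting at `1`. -/
def mulPath (x : G) {y : G} (q : Path (1:G) y) : Path x (x*y) where
  toFun := fun t => x * q t
  continuous_toFun := by continuity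
  source' := by simp
  target' := by simp

lemma mulPath_apply (x : G) {y : G} (q : Path (1:G) y) (t : I) : mulPath x q t = x * q t := rfl

lemma trans_le_half {a b c : G} (p : Path a b) (q : Path b c) (s : I) (hs : (s:ℝ) ≤ 1/2)
    (h2 : 2*(s:ℝ) ∈ I) : (p.trans q) s = p ⟨2*(s:ℝ), h2⟩ := by
  rw [Path.trans_apply, dif_pos hs]

lemma trans_ge_half {a b c : G} (p : Path a b) (q : Path b c) (s : I) (hs : 1/2 ≤ (s:ℝ))
    (h2 : 2*(s:ℝ) - 1 ∈ I) : (p.trans q) s = q ⟨2*(s:ℝ) - 1, h2⟩ := by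
  rw [Path.trans_apply]
  split_ifs with h
  · have hhalf : (s:ℝ) = 1/2 := le_antisymm h hs
    have e2 : (⟨2*(s:ℝ) - 1, h2⟩ : I) = 0 := Subtype.ext
      (by show 2*(s:ℝ) - 1 = ((0:I):ℝ); rw [hhalf]; norm_num)
    have hp1 : ∀ u : I, (u:ℝ) = 1 → p u = b := fun u hu => by
      rw [show u = (1:I) from Subtype.ext (by rw [hu]; norm_num), p.target]
    rw [e2, q.source]
    exact hp1 _ (by show 2*(s:ℝ) = 1; rw [hhalf]; norm_num)
  · rfl

variable [SimplyConnectedSpace G] [LocallyPathConnectedSpace G]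
  {U : Set G} (hU : IsOpen U) (h1U : (1:G) ∈ U) {f : G → H} (hf : ContinuousOn f U)
  (hfhom : ∀ x y : G, x ∈ U → y ∈ U → x * y ∈ U → f (x * y) = f x * f y)

include hU h1U hf hfhom in
set_option maxHeartbeats 2000000 in
/-- monodromy: a continuous local homomorphism from a simply connected, locally
path-connected group extends to a continuous homomorphism. -/
theorem exists_extension :
    ∃ (F : G →* H) (W : Set G), Continuous F ∧ W ∈ nhds (1:G) ∧ ∀ x ∈ W, F x = f x := by
  have hUnhds : U ∈ nhds (1:G) := hU.mem_nhds h1U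
  obtain ⟨V, hVopen, hV1, hVmul⟩ := exists_open_nhds_one_mul_subset hUnhds
  have hWbnhds : V ∩ V⁻¹ ∈ nhds (1:G) :=
    Filter.inter_mem (hVopen.mem_nhds hV1)
      ((hVopen.preimage continuous_inv).mem_nhds (by simpa using hV1))
  have hWbinv : ∀ a ∈ V ∩ V⁻¹, ∀ b ∈ V ∩ V⁻¹, a⁻¹ * b ∈ U := by
    intro a ha b hb
    exact hVmul (Set.mul_mem_mul (by simpa using ha.2) hb.1)
  obtain ⟨W, ⟨hWnhds, hWpc⟩, hWsub⟩ :=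
    (path_connected_basis (1:G)).mem_iff.mp hWbnhds
  have h1W : (1:G) ∈ W := mem_of_mem_nhds hWnhds
  -- strengthened fine existence
  have hexfine : ∀ (γ : I → G), Continuous γ → ∃ n : ℕ, n ≠ 0 ∧ ∀ m, n ≤ m → Fine U γ m := by
    intro γ hγ
    obtain ⟨n, hn0, hn⟩ := exists_unif hUnhds (hγ.comp continuous_snd)
    refine ⟨n, hn0, fun m hm => fine_of_unif (by omega) fun s t hst => ?_⟩
    refine hn ((0:I), s) ((0:I), t) (by
      simp only [Prod.dist_eq]
      refine max_le (by simp) (hst.trans ?_)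
      apply one_div_le_one_div_of_le (by positivity)
      exact_mod_cast hm)
  -- the common value of developments
  have hex : ∀ x : G, ∃ h : H, ∀ (p : Path (1:G) x) (n : ℕ), n ≠ 0 → Fine U ⇑p n →
      dev f ⇑p n = h := by
    intro x
    set p₀ := PathConnectedSpace.somePath (1:G) x
    obtain ⟨n0, hn₀, hfn⟩ := hexfine ⇑p₀ p₀.continuous
    exact ⟨dev f ⇑p₀ n0, fun p n hn hfp =>
      dev_eq_of_homotopic hfhom h1U hUnhds p p₀ hn hn₀ hfp (hfn n0 le_rfl)⟩
  choose F₀ hF₀ using hex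
  -- F₀ agrees with f on W
  have hWval : ∀ w ∈ W, F₀ w = f w := by
    intro w hw
    have hJ : JoinedIn W 1 w := hWpc.joinedIn 1 h1W w hw
    have hfine : Fine U ⇑hJ.somePath 1 := by
      intro i hi s t _ _ _ _
      exact hWbinv _ (hWsub (hJ.somePath_mem s)) _ (hWsub (hJ.somePath_mem t))
    have := hF₀ w hJ.somePath 1 one_ne_zero hfine
    rw [← this]
    show (1:H) * f ((hJ.somePath (pt 1 0))⁻¹ * hJ.somePath (pt 1 1)) = f w
    rw [pt_zero, pt_self one_ne_zero, one_mul]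
    have h0 : hJ.somePath 0 = 1 := hJ.somePath.source
    have h1 : hJ.somePath 1 = w := hJ.somePath.target
    rw [h0, h1, inv_one, one_mul]
  -- multiplicativity
  have hmul : ∀ x y : G, F₀ (x * y) = F₀ x * F₀ y := by
    intro x y
    set p := PathConnectedSpace.somePath (1:G) x with hp
    set q := PathConnectedSpace.somePath (1:G) y with hq
    obtain ⟨n₁, hn₁, hfn₁⟩ := hexfine ⇑p p.continuous
    obtain ⟨n₂, hn₂, hfn₂⟩ := hexfine ⇑q q.continuous
    set n := n₁ * n₂ with hn
    have hn0 : n ≠ 0 := Nat.mul_ne_zero hn₁ hn₂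
    have hfp : Fine U ⇑p n := hfn₁ n (Nat.le_mul_of_pos_right _ (by omega))
    have hfq : Fine U ⇑q n := hfn₂ n (Nat.le_mul_of_pos_left _ (by omega))
    set γ : Path (1:G) (x*y) := p.trans (mulPath x q) with hγ
    have hnR : (0:ℝ) < (n:ℝ) := by positivity
    have h2nc : (((n+n):ℕ):ℝ) = (n:ℝ)+(n:ℝ) := by push_cast; ring
    have hval_le : ∀ s : I, (s:ℝ) ≤ 1/2 → ∀ h2 : 2*(s:ℝ) ∈ I, γ s = p ⟨2*(s:ℝ), h2⟩ :=
      fun s hs h2 => trans_le_half p (mulPath x q) s hs h2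
    have hval_ge : ∀ s : I, 1/2 ≤ (s:ℝ) → ∀ h2 : 2*(s:ℝ) - 1 ∈ I,
        γ s = x * q ⟨2*(s:ℝ) - 1, h2⟩ :=
      fun s hs h2 => trans_ge_half p (mulPath x q) s hs h2
    -- fineness of γ at 2n
    have hfγ : Fine U ⇑γ ((n+n)) := by
      intro i hi s t hs1 hs2 ht1 ht2
      rw [h2nc] at hs1 hs2 ht1 ht2
      have hs1' : (i:ℝ) ≤ (s:ℝ) * ((n+n)) := (div_le_iff₀ (by positivity)).mp hs1
      have hs2' : (s:ℝ) * ((n+n)) ≤ (i:ℝ)+1 := (le_div_iff₀ (by positivity)).mp hs2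
      have ht1' : (i:ℝ) ≤ (t:ℝ) * ((n+n)) := (div_le_iff₀ (by positivity)).mp ht1
      have ht2' : (t:ℝ) * ((n+n)) ≤ (i:ℝ)+1 := (le_div_iff₀ (by positivity)).mp ht2
      by_cases hin : i < n
      · have hiR : ((i:ℝ)+1) ≤ (n:ℝ) := by exact_mod_cast hin
        have hsh : (s:ℝ) ≤ 1/2 := by nlinarith
        have hth : (t:ℝ) ≤ 1/2 := by nlinarith
        have h2s : 2*(s:ℝ) ∈ I := ⟨by nlinarith [s.2.1], by nlinarith⟩
        have h2t : 2*(t:ℝ) ∈ I := ⟨by nlinarith [t.2.1], by nlinarith⟩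
        rw [hval_le s hsh h2s, hval_le t hth h2t]
        refine hfp i hin ⟨2*(s:ℝ), h2s⟩ ⟨2*(t:ℝ), h2t⟩ ?_ ?_ ?_ ?_
        · show (i:ℝ)/n ≤ 2*(s:ℝ); rw [div_le_iff₀ hnR]; nlinarith
        · show 2*(s:ℝ) ≤ ((i:ℝ)+1)/n; rw [le_div_iff₀ hnR]; nlinarith
        · show (i:ℝ)/n ≤ 2*(t:ℝ); rw [div_le_iff₀ hnR]; nlinarith
        · show 2*(t:ℝ) ≤ ((i:ℝ)+1)/n; rw [le_div_iff₀ hnR]; nlinarith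
      · have hiR : (n:ℝ) ≤ (i:ℝ) := by exact_mod_cast Nat.le_of_not_lt hin
        obtain ⟨j, rfl⟩ : ∃ j, i = n + j := ⟨i - n, by omega⟩
        have hjn : j < n := by omega
        have hjR : ((j:ℝ)+1) ≤ (n:ℝ) := by exact_mod_cast hjn
        have hiC : ((n+j:ℕ):ℝ) = (n:ℝ) + j := by push_cast; ring
        rw [hiC] at hs1' hs2' ht1' ht2'
        have hsh : 1/2 ≤ (s:ℝ) := by nlinarith
        have hth : 1/2 ≤ (t:ℝ) := by nlinarith
        have h2s : 2*(s:ℝ) - 1 ∈ I := ⟨by nlinarith, by nlinarith [s.2.2]⟩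
        have h2t : 2*(t:ℝ) - 1 ∈ I := ⟨by nlinarith, by nlinarith [t.2.2]⟩
        rw [hval_ge s hsh h2s, hval_ge t hth h2t]
        rw [show (x * q ⟨2*(s:ℝ)-1, h2s⟩)⁻¹ * (x * q ⟨2*(t:ℝ)-1, h2t⟩)
          = (q ⟨2*(s:ℝ)-1, h2s⟩)⁻¹ * q ⟨2*(t:ℝ)-1, h2t⟩ by group]
        refine hfq j hjn ⟨2*(s:ℝ)-1, h2s⟩ ⟨2*(t:ℝ)-1, h2t⟩ ?_ ?_ ?_ ?_
        · show (j:ℝ)/n ≤ 2*(s:ℝ)-1; rw [div_le_iff₀ hnR]; nlinarith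
        · show 2*(s:ℝ)-1 ≤ ((j:ℝ)+1)/n; rw [le_div_iff₀ hnR]; nlinarith
        · show (j:ℝ)/n ≤ 2*(t:ℝ)-1; rw [div_le_iff₀ hnR]; nlinarith
        · show 2*(t:ℝ)-1 ≤ ((j:ℝ)+1)/n; rw [le_div_iff₀ hnR]; nlinarith
    -- values of γ at the grid points
    have hval1 : ∀ i : ℕ, i ≤ n → γ (pt ((n+n)) i) = p (pt n i) := by
      intro i hi
      have hc : ((pt ((n+n)) i : I) : ℝ) = (i:ℝ)/((n+n)) := by
        rw [pt_coe (by omega) (by omega), h2nc]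
      have hiR : (i:ℝ) ≤ n := by exact_mod_cast hi
      have hi0 : (0:ℝ) ≤ (i:ℝ) := by positivity
      have hsh : ((pt ((n+n)) i : I) : ℝ) ≤ 1/2 := by
        rw [hc, div_le_iff₀ (by positivity)]; nlinarith
      have h2s : 2*((pt ((n+n)) i : I) : ℝ) ∈ I :=
        ⟨by nlinarith [(pt ((n+n)) i).2.1], by nlinarith⟩
      rw [hval_le _ hsh h2s]
      congr 1
      refine Subtype.ext ?_
      show 2*((pt ((n+n)) i : I) : ℝ) = ((pt n i : I) : ℝ)
      rw [hc, pt_coe hn0 hi]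
      field_simp
      ring
    have hval2 : ∀ j : ℕ, j ≤ n → γ (pt ((n+n)) (n+j)) = x * q (pt n j) := by
      intro j hj
      have hc : ((pt ((n+n)) (n+j) : I) : ℝ) = ((n:ℝ)+j)/((n+n)) := by
        rw [pt_coe (by omega) (by omega), h2nc]; push_cast; ring_nf
      have hjR : (j:ℝ) ≤ n := by exact_mod_cast hj
      have hjR0 : (0:ℝ) ≤ j := by positivity
      have hsh : 1/2 ≤ ((pt ((n+n)) (n+j) : I) : ℝ) := by
        rw [hc, le_div_iff₀ (by positivity)]; nlinarith
      have hsh2 : ((pt ((n+n)) (n+j) : I) : ℝ) ≤ ((n:ℝ)+n)/((n+n)) := by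
        rw [hc]; gcongr
      have h2s : 2*((pt ((n+n)) (n+j) : I) : ℝ) - 1 ∈ I := by
        have : ((n:ℝ)+n)/((n+n)) = 1 := by field_simp
        constructor
        · nlinarith
        · nlinarith [hsh2, this]
      rw [hval_ge _ hsh h2s]
      congr 2
      refine Subtype.ext ?_
      show 2*((pt ((n+n)) (n+j) : I) : ℝ) - 1 = ((pt n j : I) : ℝ)
      rw [hc, pt_coe hn0 hj]
      field_simp
      ring
    -- development of γ splits
    have hdev : dev f ⇑γ ((n+n)) = dev f ⇑p n * dev f ⇑q n := by
      unfold dev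
      rw [cprod_add]
      congr 1
      · refine cprod_congr _ fun i hi => ?_
        rw [hval1 i (by omega), hval1 (i+1) (by omega)]
      · refine cprod_congr _ fun i hi => ?_
        rw [show n + i + 1 = n + (i+1) by omega, hval2 i (by omega), hval2 (i+1) (by omega)]
        congr 1
        group
    have e1 := hF₀ (x*y) γ ((n+n)) (by omega) hfγ
    have e2 := hF₀ x p n hn0 hfp
    have e3 := hF₀ y q n hn0 hfq
    rw [← e1, ← e2, ← e3, hdev]
  -- continuity
  have hcont : Continuous F₀ := by
    rw [continuous_iff_continuousAt]
    intro x
    have hfc1 : ContinuousAt f 1 := hf.continuousAt hUnhds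
    have hinner : ContinuousAt (fun y : G => x⁻¹ * y) x := by fun_prop
    have hmem : {y : G | x⁻¹ * y ∈ W} ∈ nhds x := by
      have := hinner.preimage_mem_nhds (by simpa using hWnhds)
      exact this
    have heq : (fun y => F₀ x * f (x⁻¹ * y)) =ᶠ[nhds x] F₀ := by
      filter_upwards [hmem] with y hy
      have : F₀ y = F₀ (x * (x⁻¹ * y)) := by rw [mul_inv_cancel_left]
      rw [this, hmul x (x⁻¹ * y), hWval _ hy]
    refine ContinuousAt.congr ?_ heq
    have : ContinuousAt (fun y : G => f (x⁻¹ * y)) x := by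
      refine ContinuousAt.comp ?_ hinner
      simpa using hfc1
    exact continuousAt_const.mul this
  exact ⟨MonoidHom.mk' F₀ hmul, W, hcont, hWnhds, hWval⟩

end extension

end MonodromyAux

theorem MonodromyAux.main
    {G H : Type} [TopologicalSpace G] [Group G] [IsTopologicalGroup G]
    [TopologicalSpace H] [Group H] [IsTopologicalGroup H]
    [SimplyConnectedSpace G] [LocallyPathConnectedSpace G]
    [SimplyConnectedSpace H] [LocallyPathConnectedSpace H]
    (U : Set G) (hU : IsOpen U) (h1U : (1 : G) ∈ U)
    (V : Set H) (hV : IsOpen V) (h1V : (1 : H) ∈ V)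
    (f : G → H) (hf : ContinuousOn f U)
    (g : H → G) (hg : ContinuousOn g V)
    (hfhom : ∀ x y : G, x ∈ U → y ∈ U → x * y ∈ U → f (x * y) = f x * f y)
    (hghom : ∀ x y : H, x ∈ V → y ∈ V → x * y ∈ V → g (x * y) = g x * g y)
    (hgf : ∀ x ∈ U, f x ∈ V → g (f x) = x)
    (hfg : ∀ y ∈ V, g y ∈ U → f (g y) = y) :
    ∃ e : G ≃* H, Continuous e ∧ Continuous e.symm := by
  obtain ⟨F, WG, hFcont, hWGnhds, hFval⟩ := MonodromyAux.exists_extension hU h1U hf hfhom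
  obtain ⟨F', WH, hF'cont, hWHnhds, hF'val⟩ := MonodromyAux.exists_extension hV h1V hg hghom
  -- F' ∘ F = id near 1
  have hf1 : f 1 = 1 := MonodromyAux.f_one hfhom h1U
  have hg1 : g 1 = 1 := MonodromyAux.f_one hghom h1V
  have hfc1 : ContinuousAt f 1 := hf.continuousAt (hU.mem_nhds h1U)
  have hgc1 : ContinuousAt g 1 := hg.continuousAt (hV.mem_nhds h1V)
  have hevG : ∀ᶠ x in nhds (1:G), F' (F x) = x := by
    have ht : Filter.Tendsto f (nhds (1:G)) (nhds (1:H)) := by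
      have := hfc1.tendsto; rwa [hf1] at this
    have hev := ht (Filter.inter_mem (hV.mem_nhds h1V) hWHnhds)
    filter_upwards [hU.mem_nhds h1U, hWGnhds, hev] with x hxU hxWG hxf
    rw [hFval x hxWG, hF'val _ hxf.2, hgf x hxU hxf.1]
  have hevH : ∀ᶠ y in nhds (1:H), F (F' y) = y := by
    have ht : Filter.Tendsto g (nhds (1:H)) (nhds (1:G)) := by
      have := hgc1.tendsto; rwa [hg1] at this
    have hev := ht (Filter.inter_mem (hU.mem_nhds h1U) hWGnhds)
    filter_upwards [hV.mem_nhds h1V, hWHnhds, hev] with y hyV hyWH hyg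
    rw [hF'val y hyWH, hFval _ hyg.2, hfg y hyV hyg.1]
  -- globalize via connectedness
  have hglobG : ∀ x : G, F' (F x) = x := by
    set K : Subgroup G :=
      { carrier := {x : G | F' (F x) = x}
        one_mem' := by simp
        mul_mem' := by
          intro a b ha hb
          simp only [Set.mem_setOf_eq, map_mul] at *
          rw [ha, hb]
        inv_mem' := by
          intro a ha
          simp only [Set.mem_setOf_eq, map_inv] at *
          rw [ha] } with hK
    have hKnhds : (K : Set G) ∈ nhds (1:G) := by
      filter_upwards [hevG] with x hx using hx
    have hKopen : IsOpen (K : Set G) := Subgroup.isOpen_of_mem_nhds K hKnhds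
    have hKclosed : IsClosed (K : Set G) := Subgroup.isClosed_of_isOpen K hKopen
    have : (K : Set G) = Set.univ := IsClopen.eq_univ ⟨hKclosed, hKopen⟩ ⟨1, K.one_mem⟩
    intro x
    have : x ∈ (K : Set G) := this ▸ Set.mem_univ x
    exact this
  have hglobH : ∀ y : H, F (F' y) = y := by
    set K : Subgroup H :=
      { carrier := {y : H | F (F' y) = y}
        one_mem' := by simp
        mul_mem' := by
          intro a b ha hb
          simp only [Set.mem_setOf_eq, map_mul] at *
          rw [ha, hb]
        inv_mem' := by
          intro a ha
          simp only [Set.mem_setOf_eq, map_inv] at *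
          rw [ha] } with hK
    have hKnhds : (K : Set H) ∈ nhds (1:H) := by
      filter_upwards [hevH] with y hy using hy
    have hKopen : IsOpen (K : Set H) := Subgroup.isOpen_of_mem_nhds K hKnhds
    have hKclosed : IsClosed (K : Set H) := Subgroup.isClosed_of_isOpen K hKopen
    have : (K : Set H) = Set.univ := IsClopen.eq_univ ⟨hKclosed, hKopen⟩ ⟨1, K.one_mem⟩
    intro y
    have : y ∈ (K : Set H) := this ▸ Set.mem_univ y
    exact this
  refine ⟨{ toFun := F
            invFun := F'
            left_inv := hglobG
            right_inv := hglobH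
            map_mul' := F.map_mul }, hFcont, hF'cont⟩

/-- two simply connected (path-connected, locally path-connected)
topological groups which are locally isomorphic — i.e. admit mutually inverse continuous
local homomorphisms defined on open neighbourhoods of the identities — are isomorphic as
topological groups. -/
theorem locally_isomorphic_simply_connected_groups_isomorphic
    {G H : Type} [TopologicalSpace G] [Group G] [IsTopologicalGroup G]
    [TopologicalSpace H] [Group H] [IsTopologicalGroup H]
    [SimplyConnectedSpace G] [LocallyPathConnectedSpace G]
    [SimplyConnectedSpace H] [LocallyPathConnectedSpace H]
    (U : Set G) (hU : IsOpen U) (h1U : (1 : G) ∈ U)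
    (V : Set H) (hV : IsOpen V) (h1V : (1 : H) ∈ V)
    (f : G → H) (hf : ContinuousOn f U)
    (g : H → G) (hg : ContinuousOn g V)
    (hfhom : ∀ x y : G, x ∈ U → y ∈ U → x * y ∈ U → f (x * y) = f x * f y)
    (hghom : ∀ x y : H, x ∈ V → y ∈ V → x * y ∈ V → g (x * y) = g x * g y)
    (hgf : ∀ x ∈ U, f x ∈ V → g (f x) = x)
    (hfg : ∀ y ∈ V, g y ∈ U → f (g y) = y) :
    ∃ e : G ≃* H, Continuous e ∧ Continuous e.symm := by
  exact MonodromyAux.main U hU h1U V hV h1V f hf g hg hfhom hghom hgf hfg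
end

section
/- Let X be a path-connected topological abelian group and m a positive integer such that the multiplication-by-m map m : X → X is a covering map. Then the induced map m₊ on π₁(X, 0) is multiplication by m, and the m-torsion subgroup X[m] is isomorphic to π₁(X, 0) / m·π₁(X, 0). -/
open CategoryTheory

/-- Transport of fundamental groups along an equality of basepoints. -/
noncomputable def castπ {X : Type} [TopologicalSpace X] {a b : X} (h : a = b) :
    FundamentalGroup X a →* FundamentalGroup X b := by
  subst h; exact MonoidHom.id _

/-- The endomorphism of `π₁(X, 0)` induced by the continuous map `x ↦ m • x` on a
topological additive group `X` (which fixes the basepoint `0`). -/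
noncomputable def nsmulStar {X : Type} [TopologicalSpace X] [AddCommGroup X]
    [IsTopologicalAddGroup X] (m : ℕ) :
    FundamentalGroup X (0 : X) →* FundamentalGroup X (0 : X) :=
  (castπ (smul_zero m : m • (0 : X) = 0)).comp (inducedHom (continuous_nsmul m) (0 : X))


set_option linter.unusedSectionVars false

section Pi1Algebra

open CategoryTheory

attribute [local instance] Path.Homotopic.setoid

variable {X : Type} [TopologicalSpace X] [AddCommGroup X] [IsTopologicalAddGroup X]

/-- Pointwise sum of two paths in a topological additive group. -/
def pathAdd {x y x' y' : X} (a : Path x y) (b : Path x' y') : Path (x + x') (y + y') :=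
  (a.prod b).map continuous_add

lemma pathAdd_apply {x y x' y' : X} (a : Path x y) (b : Path x' y') (t : unitInterval) :
    pathAdd a b t = a t + b t := rfl

/-- `m`-fold pointwise sum of a loop at `0`, as a loop at `0`. -/
def loop0 (m : ℕ) (a : Path (0 : X) 0) : Path (0 : X) 0 :=
  (a.map (continuous_nsmul m)).cast (smul_zero m).symm (smul_zero m).symm

lemma loop0_apply (m : ℕ) (a : Path (0 : X) 0) (t : unitInterval) :
    loop0 m a t = m • a t := rfl

lemma pathAdd_homotopic {x y x' y' : X} {a a' : Path x y} {b b' : Path x' y'}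
    (ha : a.Homotopic a') (hb : b.Homotopic b') : (pathAdd a b).Homotopic (pathAdd a' b') := by
  obtain ⟨F⟩ := ha; obtain ⟨G⟩ := hb
  exact ⟨(Path.Homotopic.prodHomotopy F G).map ⟨fun p => p.1 + p.2, continuous_add⟩⟩

lemma homotopic_cast {Z : Type*} [TopologicalSpace Z] {x y x' y' : Z} {p q : Path x y}
    (h : p.Homotopic q) (hx : x' = x) (hy : y' = y) :
    (p.cast hx hy).Homotopic (q.cast hx hy) := by
  subst hx; subst hy
  have hp : p.cast rfl rfl = p := by ext t; exact congr_fun (Path.cast_coe p rfl rfl) t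
  have hq : q.cast rfl rfl = q := by ext t; exact congr_fun (Path.cast_coe q rfl rfl) t
  rw [hp, hq]; exact h

/-- Pointwise sum of two loops at `0`, as a loop at `0`. -/
def pathAdd0 (a b : Path (0 : X) 0) : Path (0 : X) 0 :=
  (pathAdd a b).cast (zero_add (0 : X)).symm (zero_add (0 : X)).symm

lemma pathAdd0_trans (a b : Path (0 : X) 0) :
    (⟦pathAdd0 a b⟧ : Path.Homotopic.Quotient (0 : X) 0) = ⟦a.trans b⟧ := by
  have key : pathAdd0 (a.trans (Path.refl (0 : X))) ((Path.refl (0 : X)).trans b)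
      = a.trans b := by
    ext t
    show (a.trans (Path.refl 0)) t + ((Path.refl 0).trans b) t = (a.trans b) t
    simp only [Path.trans_apply]
    split_ifs <;> simp
  have step : (pathAdd0 a b).Homotopic
      (pathAdd0 (a.trans (Path.refl (0 : X))) ((Path.refl (0 : X)).trans b)) :=
    homotopic_cast (pathAdd_homotopic ⟨(Path.Homotopy.transRefl a).symm⟩
      ⟨(Path.Homotopy.reflTrans b).symm⟩) _ _
  rw [← key]
  exact Quotient.sound step

lemma aut_hom_mul {x : X} (g h : FundamentalGroup X x) :
    (g * h : FundamentalGroup X x) = CategoryTheory.CategoryStruct.comp h g := rfl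

/-- Build an element of the fundamental group from a loop class. -/
noncomputable def fromLoop {x : X} (q : Path.Homotopic.Quotient x x) : FundamentalGroup X x :=
  let q' : FundamentalGroupoid.mk x ⟶ FundamentalGroupoid.mk x := q
  q'

lemma fromLoop_hom {x : X} (q : Path.Homotopic.Quotient x x) : fromLoop q = q := rfl

lemma pow_hom (m : ℕ) (τ : FundamentalGroup X (0 : X)) (c : Path (0 : X) 0)
    (hc : τ = ⟦c⟧) : (τ ^ m) = ⟦loop0 m c⟧ := by
  induction m with
  | zero =>
      rw [pow_zero]
      show 𝟙 (FundamentalGroupoid.mk (0 : X)) = _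
      rw [FundamentalGroupoid.id_eq_path_refl]
      have : loop0 0 c = Path.refl (0 : X) := by
        ext t; show (0 : ℕ) • c t = 0; simp
      rw [this]
  | succ n ih =>
      rw [pow_succ, aut_hom_mul, ih, hc]
      have : loop0 (n + 1) c = pathAdd0 c (loop0 n c) := by
        ext t
        show (n + 1) • c t = c t + n • c t
        rw [succ_nsmul']
      rw [this]
      exact (pathAdd0_trans c (loop0 n c)).symm

lemma castπ_hom {a b : X} (h : a = b) (σ : FundamentalGroup X a) (q : Path a a)
    (hq : σ = ⟦q⟧) : (castπ h σ) = ⟦q.cast h.symm h.symm⟧ := by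
  subst h
  have hcast : q.cast rfl rfl = q := by
    ext t; exact congr_fun (Path.cast_coe q rfl rfl) t
  rw [hcast]
  exact hq

lemma inducedHom_hom_s14 {Y : Type} [TopologicalSpace Y] {f : X → Y} (hf : Continuous f) (x : X)
    (σ : FundamentalGroup X x) (q : Path x x)
    (hq : σ = ⟦q⟧) : (inducedHom hf x σ) = ⟦q.map hf⟧ := by
  show (FundamentalGroupoid.fundamentalGroupoidFunctor.map
      (X := TopCat.of X) (Y := TopCat.of Y) (TopCat.ofHom ⟨f, hf⟩)).map σ = _
  rw [hq]
  rfl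

lemma nsmulStar_hom (m : ℕ) (σ : FundamentalGroup X (0 : X)) (a : Path (0 : X) 0)
    (ha : σ = ⟦a⟧) : (nsmulStar m σ) = ⟦loop0 m a⟧ := by
  show (castπ (smul_zero m) ((inducedHom (continuous_nsmul m) (0 : X)) σ)) = _
  exact castπ_hom (smul_zero m) _ (a.map (continuous_nsmul m))
    (inducedHom_hom_s14 (continuous_nsmul m) _ σ a ha)

end Pi1Algebra

section CoveringPart

attribute [local instance] Path.Homotopic.setoid

variable {X : Type} [TopologicalSpace X] [AddCommGroup X] [IsTopologicalAddGroup X]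
variable (m : ℕ) (hp : IsCoveringMap fun x : X => m • x)

/-- Endpoint of the lift (starting at `0`) of a loop at `0` through `x ↦ m • x`. -/
noncomputable def endLift (γ : Path (0 : X) 0) : X :=
  hp.liftPath γ.toContinuousMap 0 (by simp) 1

lemma endLift_torsion (γ : Path (0 : X) 0) : m • endLift m hp γ = 0 := by
  have h := congr_fun (hp.liftPath_lifts γ.toContinuousMap 0 (by simp)) 1
  simpa [endLift] using h

lemma endLift_homotopic {γ₀ γ₁ : Path (0 : X) 0} (h : Path.Homotopic γ₀ γ₁) :
    endLift m hp γ₀ = endLift m hp γ₁ :=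
  hp.liftPath_apply_one_eq_of_homotopicRel h 0 (by simp) (by simp)

/-- `endLift` descended to homotopy classes. -/
noncomputable def endQ : Path.Homotopic.Quotient (0 : X) 0 → X :=
  Quotient.lift (endLift m hp) fun _ _ h => endLift_homotopic m hp h

lemma endLift_trans (a b : Path (0 : X) 0) :
    endLift m hp (a.trans b) = endLift m hp a + endLift m hp b := by
  set α := endLift m hp a with hα
  set β := endLift m hp b with hβ
  let A : Path (0 : X) α :=
    { toContinuousMap := hp.liftPath a.toContinuousMap 0 (by simp)
      source' := hp.liftPath_zero _ _ _
      target' := rfl }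
  let B : Path (0 : X) β :=
    { toContinuousMap := hp.liftPath b.toContinuousMap 0 (by simp)
      source' := hp.liftPath_zero _ _ _
      target' := rfl }
  let B' : Path α (α + β) :=
    (B.map (continuous_const.add continuous_id)).cast (add_zero α).symm rfl
  have hB' : (⇑B' : unitInterval → X) = fun s => α + B s := by
    show ⇑((B.map (continuous_const.add continuous_id)).cast (add_zero α).symm rfl) = _
    rw [Path.cast_coe, Path.map_coe]
    rfl
  have HΓ : ⇑(A.trans B') = ⇑(hp.liftPath (a.trans b).toContinuousMap 0 (by simp)) := by
    rw [hp.eq_liftPath_iff (by simp)]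
    refine ⟨(A.trans B').continuous, funext fun t => ?_, (A.trans B').source⟩
    show m • (A.trans B') t = (a.trans b) t
    rw [Path.trans_apply, Path.trans_apply]
    split_ifs with h
    · exact congr_fun (hp.liftPath_lifts a.toContinuousMap 0 (by simp)) _
    · rw [congr_fun hB' _, smul_add, hα, endLift_torsion, zero_add]
      exact congr_fun (hp.liftPath_lifts b.toContinuousMap 0 (by simp)) _
  have h1 : endLift m hp (a.trans b) = (A.trans B') 1 := (congr_fun HΓ 1).symm
  rw [h1, (A.trans B').target]

variable [PathConnectedSpace X]

lemma exists_endLift_eq (x : X) (hx : m • x = 0) :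
    ∃ γ : Path (0 : X) 0, endLift m hp γ = x := by
  obtain ⟨q⟩ := PathConnectedSpace.joined (0 : X) x
  refine ⟨(q.map (continuous_nsmul m)).cast (smul_zero m).symm hx.symm, ?_⟩
  have hq : (⇑q : unitInterval → X) =
      ⇑(hp.liftPath ((q.map (continuous_nsmul m)).cast (smul_zero m).symm
        hx.symm).toContinuousMap 0 (by simp)) := by
    rw [hp.eq_liftPath_iff (by simp)]
    refine ⟨q.continuous, funext fun t => ?_, q.source⟩
    show m • q t = ((q.map (continuous_nsmul m)).cast (smul_zero m).symm hx.symm) t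
    rw [show ⇑((q.map (continuous_nsmul m)).cast (smul_zero m).symm hx.symm)
      = ⇑(q.map (continuous_nsmul m)) from Path.cast_coe _ _ _]
    rfl
  show hp.liftPath _ 0 _ 1 = x
  rw [← congr_fun hq 1]
  exact q.target

lemma loop_eq_of_endLift_zero (γ : Path (0 : X) 0) (h : endLift m hp γ = 0) :
    ∃ c : Path (0 : X) 0, γ = loop0 m c := by
  refine ⟨{ toContinuousMap := hp.liftPath γ.toContinuousMap 0 (by simp)
            source' := hp.liftPath_zero _ _ _
            target' := h }, ?_⟩
  ext t
  rw [loop0_apply]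
  exact (congr_fun (hp.liftPath_lifts γ.toContinuousMap 0 (by simp)) t).symm

lemma endLift_loop0 (c : Path (0 : X) 0) : endLift m hp (loop0 m c) = 0 := by
  have hc : (⇑c : unitInterval → X) =
      ⇑(hp.liftPath (loop0 m c).toContinuousMap 0 (by simp)) := by
    rw [hp.eq_liftPath_iff (by simp)]
    exact ⟨c.continuous, funext fun t => rfl, c.source⟩
  show hp.liftPath _ 0 _ 1 = 0
  rw [← congr_fun hc 1]
  exact c.target

end CoveringPart

/-- let `X` be a path-connected topological abelian group and `m > 0` such
that `x ↦ m • x` is a covering map.  Then the induced endomorphism of `π₁(X, 0)` is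
multiplication by `m`, and the `m`-torsion subgroup `X[m]` is isomorphic to
`π₁(X, 0)/m·π₁(X, 0)` — expressed via a homomorphism from (the additivization of)
`π₁(X, 0)` to `X` with image `X[m]` and kernel `m·π₁(X, 0)`. -/
theorem torsion_iso_pi1_mod_m
    {X : Type} [TopologicalSpace X] [AddCommGroup X] [IsTopologicalAddGroup X]
    [PathConnectedSpace X] [LocallyPathConnectedSpace X]
    (m : ℕ) (hm : 0 < m) (hcov : IsCoveringMap fun x : X => m • x) :
    (∀ σ : FundamentalGroup X (0 : X), nsmulStar m σ = σ ^ m) ∧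
      ∃ φ : Additive (FundamentalGroup X (0 : X)) →+ X,
        Set.range φ = {x : X | m • x = 0} ∧
        ∀ a : Additive (FundamentalGroup X (0 : X)), φ a = 0 ↔ ∃ b, a = m • b := by
    classical
  have part1 : ∀ σ : FundamentalGroup X (0 : X), nsmulStar m σ = σ ^ m := by
    intro σ
    obtain ⟨a, ha⟩ := Quotient.exists_rep
      (σ : Path.Homotopic.Quotient (0 : X) 0)
    exact (
      ((nsmulStar_hom m σ a ha.symm).trans (pow_hom m σ a ha.symm).symm))
  refine ⟨part1, ?_⟩
  have homQ : ∀ (g h : FundamentalGroup X (0 : X)),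
      endQ m hcov (g * h) = endQ m hcov g + endQ m hcov h := by
    intro g h
    obtain ⟨pa, hpa⟩ := Quotient.exists_rep (g : Path.Homotopic.Quotient (0 : X) 0)
    obtain ⟨pb, hpb⟩ := Quotient.exists_rep (h : Path.Homotopic.Quotient (0 : X) 0)
    have h1 : (g * h) = (⟦pb.trans pa⟧ : Path.Homotopic.Quotient (0 : X) 0) := by
      rw [← hpa, ← hpb]; rfl
    rw [h1, ← hpa, ← hpb]
    show endLift m hcov (pb.trans pa) = endLift m hcov pa + endLift m hcov pb
    rw [endLift_trans]
    exact add_comm _ _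
  refine ⟨AddMonoidHom.mk' (fun a => endQ m hcov (Additive.toMul a))
    (fun a b => homQ _ _), ?_, ?_⟩
  · apply Set.eq_of_subset_of_subset
    · rintro x ⟨a, rfl⟩
      obtain ⟨pa, hpa⟩ := Quotient.exists_rep
        ((Additive.toMul a) : Path.Homotopic.Quotient (0 : X) 0)
      show m • endQ m hcov (Additive.toMul a) = 0
      rw [← hpa]
      exact endLift_torsion m hcov pa
    · intro x hx
      obtain ⟨γ, hγ⟩ := exists_endLift_eq m hcov x hx
      exact ⟨Additive.ofMul (fromLoop (⟦γ⟧ : Path.Homotopic.Quotient (0 : X) 0)), hγ⟩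
  · intro a
    constructor
    · intro h
      obtain ⟨γ, hγ⟩ := Quotient.exists_rep
        ((Additive.toMul a) : Path.Homotopic.Quotient (0 : X) 0)
      have h0 : endLift m hcov γ = 0 := by
        have : endQ m hcov (Additive.toMul a) = 0 := h
        rwa [← hγ] at this
      obtain ⟨c, hc⟩ := loop_eq_of_endLift_zero m hcov γ h0
      refine ⟨Additive.ofMul (fromLoop (⟦c⟧ : Path.Homotopic.Quotient (0 : X) 0)), ?_⟩
      have hτ : Additive.toMul a
          = (fromLoop (⟦c⟧ : Path.Homotopic.Quotient (0 : X) 0)) ^ m := by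
        rw [pow_hom m _ c (fromLoop_hom _), ← hγ, hc]
      calc a = Additive.ofMul (Additive.toMul a) := rfl
        _ = Additive.ofMul ((fromLoop (⟦c⟧ : Path.Homotopic.Quotient (0 : X) 0)) ^ m) := by
              rw [hτ]
        _ = m • Additive.ofMul (fromLoop (⟦c⟧ : Path.Homotopic.Quotient (0 : X) 0)) :=
              ofMul_pow m _
    · rintro ⟨b, rfl⟩
      obtain ⟨c, hc⟩ := Quotient.exists_rep
        ((Additive.toMul b) : Path.Homotopic.Quotient (0 : X) 0)
      show endQ m hcov (Additive.toMul (m • b)) = 0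
      have h1 : (Additive.toMul (m • b))
          = (⟦loop0 m c⟧ : Path.Homotopic.Quotient (0 : X) 0) := by
        rw [toMul_nsmul]
        exact pow_hom m _ c hc.symm
      rw [h1]
      exact endLift_loop0 m hcov c
end
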